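/- arXiv:0907.4479 — 4 statements merged into one kernel-verified Lean document; each statement's English description precedes it below -/
import Mathlib

section
/- Let (X,d) be a metric space and γ : [0,1] → X a continuous curve. If γ is not absolutely continuous with an L² metric majorant (i.e. γ ∉ AC²([0,1],X)), then the energy H(γ) = sup over partitions of (1/2) Σ d²(γ(tᵢ),γ(t_{i+1}))/(t_{i+1}−tᵢ) equals +∞. -/
open MeasureTheory intervalIntegral ENNReal

/-- The energy of a curve: supremum over all partitions of the discrete energy. -/
noncomputable def curveEnergy {X : Type*} [MetricSpace X] (γ : ℝ → X) : ℝ≥0∞ :=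
  ⨆ (n : ℕ) (t : Fin (n + 1) → ℝ)
    (_ : StrictMono t ∧ t 0 = 0 ∧ t (Fin.last n) = 1),
      ENNReal.ofReal ((1 / 2) * ∑ i : Fin n,
        dist (γ (t i.castSucc)) (γ (t i.succ)) ^ 2 / (t i.succ - t i.castSucc))

section Aux
variable {X : Type*} [MetricSpace X] (γ : ℝ → X)

lemma partSum_le (h : curveEnergy γ ≠ ⊤) (N : ℕ) :
    ∑ i ∈ Finset.range (2^N), dist (γ ((i:ℝ)/2^N)) (γ (((i:ℝ)+1)/2^N)) ^ 2 * 2^N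
      ≤ 2 * (curveEnergy γ).toReal := by
  set t : Fin (2^N + 1) → ℝ := fun i => (i:ℝ)/2^N with ht
  have hpow : (0:ℝ) < 2^N := by positivity
  have h1 : StrictMono t := by
    intro a b hab
    simp only [ht]
    exact div_lt_div_of_pos_right (by exact_mod_cast hab) hpow
  have h2 : t 0 = 0 := by simp [ht]
  have h3 : t (Fin.last (2^N)) = 1 := by
    simp [ht, Fin.last]
  have key : ENNReal.ofReal ((1 / 2) * ∑ i : Fin (2^N),
        dist (γ (t i.castSucc)) (γ (t i.succ)) ^ 2 / (t i.succ - t i.castSucc))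
      ≤ curveEnergy γ := by
    apply le_iSup_of_le (2^N)
    apply le_iSup_of_le t
    exact le_iSup_of_le ⟨h1, h2, h3⟩ le_rfl
  have hsum : ∑ i : Fin (2^N),
        dist (γ (t i.castSucc)) (γ (t i.succ)) ^ 2 / (t i.succ - t i.castSucc)
      = ∑ i ∈ Finset.range (2^N), dist (γ ((i:ℝ)/2^N)) (γ (((i:ℝ)+1)/2^N)) ^ 2 * 2^N := by
    have step : ∀ i : Fin (2^N), dist (γ (t i.castSucc)) (γ (t i.succ)) ^ 2 / (t i.succ - t i.castSucc)
        = (fun (j:ℕ) => dist (γ ((j:ℝ)/2^N)) (γ (((j:ℝ)+1)/2^N)) ^ 2 * 2^N) i.val := by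
      intro i
      have hdiff : t i.succ - t i.castSucc = 1/2^N := by
        simp only [ht, Fin.val_succ, Fin.coe_castSucc, Nat.cast_add, Nat.cast_one]
        ring
      have hc : t i.castSucc = (i:ℝ)/2^N := by simp [ht]
      have hs' : t i.succ = ((i:ℝ)+1)/2^N := by simp [ht, Fin.val_succ]
      have hd2 : dist (γ (t i.castSucc)) (γ (t i.succ))
          = dist (γ ((i:ℝ)/2^N)) (γ (((i:ℝ)+1)/2^N)) := by rw [hc, hs']
      simp only [hdiff, hd2]
      field_simp
    rw [Finset.sum_congr rfl (fun i _ => step i)]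
    exact Fin.sum_univ_eq_sum_range (fun (j:ℕ) => dist (γ ((j:ℝ)/2^N)) (γ (((j:ℝ)+1)/2^N)) ^ 2 * 2^N) (2^N)
  rw [hsum] at key
  have := (ENNReal.ofReal_le_iff_le_toReal h).mp key
  linarith

noncomputable def μ01 : Measure ℝ := volume.restrict (Set.Icc (0:ℝ) 1)

instance : IsFiniteMeasure μ01 :=
  ⟨by rw [μ01, Measure.restrict_apply_univ]; exact measure_Icc_lt_top⟩

noncomputable def stepFn (N : ℕ) : ℝ → ℝ := fun x =>
  ∑ i ∈ Finset.range (2^N), Set.indicator (Set.Ico ((i:ℝ)/2^N) (((i:ℝ)+1)/2^N))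
    (fun _ => 2^N * dist (γ ((i:ℝ)/2^N)) (γ (((i:ℝ)+1)/2^N))) x

lemma int_ind (ν : Measure ℝ) (a b c : ℝ) :
    ∫ x, (Set.Ico a b).indicator (fun _ => c) x ∂ν = c * (ν (Set.Ico a b)).toReal := by
  rw [MeasureTheory.integral_indicator measurableSet_Ico, setIntegral_const, smul_eq_mul, mul_comm]
  rfl

lemma Ico_disj (N : ℕ) {i j : ℕ} (hij : i ≠ j) :
    Disjoint (Set.Ico ((i:ℝ)/2^N) (((i:ℝ)+1)/2^N)) (Set.Ico ((j:ℝ)/2^N) (((j:ℝ)+1)/2^N)) := by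
  have key : ∀ i j : ℕ, i < j →
      Disjoint (Set.Ico ((i:ℝ)/2^N) (((i:ℝ)+1)/2^N)) (Set.Ico ((j:ℝ)/2^N) (((j:ℝ)+1)/2^N)) := by
    intro i j hlt
    apply Set.Ico_disjoint_Ico.mpr
    have h1 : ((i:ℝ)+1)/2^N ≤ (j:ℝ)/2^N := by
      gcongr
      exact_mod_cast hlt
    calc min (((i:ℝ)+1)/2^N) (((j:ℝ)+1)/2^N) ≤ ((i:ℝ)+1)/2^N := min_le_left _ _
      _ ≤ (j:ℝ)/2^N := h1
      _ ≤ max ((i:ℝ)/2^N) ((j:ℝ)/2^N) := le_max_right _ _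
  rcases lt_or_gt_of_ne hij with hlt | hlt
  · exact key i j hlt
  · exact (key j i hlt).symm

lemma sum_ind_sq {n : ℕ} (A : ℕ → Set ℝ) (c : ℕ → ℝ)
    (hd : ∀ i j, i ≠ j → Disjoint (A i) (A j)) (x : ℝ) :
    (∑ i ∈ Finset.range n, (A i).indicator (fun _ => c i) x)^2
      = ∑ i ∈ Finset.range n, (A i).indicator (fun _ => (c i)^2) x := by
  by_cases hx : ∃ i ∈ Finset.range n, x ∈ A i
  · obtain ⟨i₀, hi₀, hxi₀⟩ := hx
    have hz : ∀ j ∈ Finset.range n, j ≠ i₀ → (A j).indicator (fun _ => c j) x = 0 :=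
      fun j _ hj => Set.indicator_of_notMem
        (fun hxj => Set.disjoint_left.mp (hd j i₀ hj) hxj hxi₀) _
    have hz' : ∀ j ∈ Finset.range n, j ≠ i₀ → (A j).indicator (fun _ => (c j)^2) x = 0 :=
      fun j _ hj => Set.indicator_of_notMem
        (fun hxj => Set.disjoint_left.mp (hd j i₀ hj) hxj hxi₀) _
    rw [Finset.sum_eq_single_of_mem i₀ hi₀ hz, Finset.sum_eq_single_of_mem i₀ hi₀ hz']
    simp [Set.indicator_of_mem hxi₀]
  · push_neg at hx
    rw [Finset.sum_eq_zero (fun i hi => Set.indicator_of_notMem (hx i hi) _),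
      Finset.sum_eq_zero (fun i hi => Set.indicator_of_notMem (hx i hi) _)]
    norm_num


lemma Ico_subset_Icc01 {N i : ℕ} (hi : i < 2^N) :
    Set.Ico ((i:ℝ)/2^N) (((i:ℝ)+1)/2^N) ⊆ Set.Icc (0:ℝ) 1 := by
  have hpow : (0:ℝ) < 2^N := by positivity
  intro x hx
  constructor
  · have : (0:ℝ) ≤ (i:ℝ)/2^N := by positivity
    linarith [hx.1]
  · have h2 : ((i:ℝ)+1)/2^N ≤ 1 := by
      rw [div_le_one hpow]
      have : (i:ℝ)+1 ≤ (2:ℝ)^N := by exact_mod_cast Nat.succ_le_of_lt hi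
      linarith
    linarith [hx.2]

lemma μ01_Ico {N i : ℕ} (hi : i < 2^N) :
    μ01 (Set.Ico ((i:ℝ)/2^N) (((i:ℝ)+1)/2^N)) = ENNReal.ofReal (1/2^N) := by
  rw [μ01, Measure.restrict_apply measurableSet_Ico,
    Set.inter_eq_left.mpr (Ico_subset_Icc01 hi), Real.volume_Ico]
  congr 1
  ring

lemma stepFn_eq_sum (N : ℕ) : stepFn γ N
    = ∑ i ∈ Finset.range (2^N), Set.indicator (Set.Ico ((i:ℝ)/2^N) (((i:ℝ)+1)/2^N))
        (fun _ => 2^N * dist (γ ((i:ℝ)/2^N)) (γ (((i:ℝ)+1)/2^N))) := by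
  funext x
  rw [stepFn, Finset.sum_apply]

lemma stepFn_memℒp (N : ℕ) (p : ℝ≥0∞) : MemLp (stepFn γ N) p μ01 := by
  rw [stepFn_eq_sum]
  exact memLp_finset_sum' _ fun i _ =>
    memLp_indicator_const p measurableSet_Ico _ (Or.inr (measure_ne_top _ _))

lemma stepFn_sq_integral (h : curveEnergy γ ≠ ⊤) (N : ℕ) :
    ∫ x, (stepFn γ N x)^2 ∂μ01 ≤ 2 * (curveEnergy γ).toReal := by
  have hpow : (0:ℝ) < 2^N := by positivity
  have heq : ∀ x, (stepFn γ N x)^2 = ∑ i ∈ Finset.range (2^N),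
      Set.indicator (Set.Ico ((i:ℝ)/2^N) (((i:ℝ)+1)/2^N))
        (fun _ => (2^N * dist (γ ((i:ℝ)/2^N)) (γ (((i:ℝ)+1)/2^N)))^2) x := by
    intro x
    exact sum_ind_sq _ _ (fun i j hij => Ico_disj N hij) x
  rw [MeasureTheory.integral_congr_ae (Filter.Eventually.of_forall heq)]
  rw [MeasureTheory.integral_finset_sum _ (fun i _ =>
    (integrable_const _).indicator measurableSet_Ico)]
  have : ∀ i ∈ Finset.range (2^N),
      ∫ x, Set.indicator (Set.Ico ((i:ℝ)/2^N) (((i:ℝ)+1)/2^N))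
        (fun _ => (2^N * dist (γ ((i:ℝ)/2^N)) (γ (((i:ℝ)+1)/2^N)))^2) x ∂μ01
      = dist (γ ((i:ℝ)/2^N)) (γ (((i:ℝ)+1)/2^N))^2 * 2^N := by
    intro i hi
    rw [int_ind, μ01_Ico (Finset.mem_range.mp hi), ENNReal.toReal_ofReal (by positivity)]
    field_simp
  rw [Finset.sum_congr rfl this]
  exact partSum_le γ h N

lemma stepFn_setIntegral (N j k : ℕ) (hjk : j ≤ k) (hk : k ≤ 2^N) :
    ∫ x in Set.Icc ((j:ℝ)/2^N) ((k:ℝ)/2^N), stepFn γ N x ∂μ01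
      = ∑ i ∈ Finset.Ico j k, dist (γ ((i:ℝ)/2^N)) (γ (((i:ℝ)+1)/2^N)) := by
  have hpow : (0:ℝ) < 2^N := by positivity
  have hint : ∀ i ∈ Finset.range (2^N),
      Integrable (Set.indicator (Set.Ico ((i:ℝ)/2^N) (((i:ℝ)+1)/2^N))
        (fun _ => (2:ℝ)^N * dist (γ ((i:ℝ)/2^N)) (γ (((i:ℝ)+1)/2^N))))
        (μ01.restrict (Set.Icc ((j:ℝ)/2^N) ((k:ℝ)/2^N))) :=
    fun i _ => (integrable_const _).indicator measurableSet_Ico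
  simp only [stepFn]
  rw [MeasureTheory.integral_finset_sum _ hint]
  have hterm : ∀ i ∈ Finset.range (2^N),
      ∫ x, Set.indicator (Set.Ico ((i:ℝ)/2^N) (((i:ℝ)+1)/2^N))
        (fun _ => (2:ℝ)^N * dist (γ ((i:ℝ)/2^N)) (γ (((i:ℝ)+1)/2^N))) x
          ∂(μ01.restrict (Set.Icc ((j:ℝ)/2^N) ((k:ℝ)/2^N)))
      = if i ∈ Finset.Ico j k then dist (γ ((i:ℝ)/2^N)) (γ (((i:ℝ)+1)/2^N)) else 0 := by
    intro i hi
    have hi' : i < 2^N := Finset.mem_range.mp hi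
    rw [int_ind]
    have hmeas : (μ01.restrict (Set.Icc ((j:ℝ)/2^N) ((k:ℝ)/2^N)))
        (Set.Ico ((i:ℝ)/2^N) (((i:ℝ)+1)/2^N))
        = volume (Set.Ico ((i:ℝ)/2^N) (((i:ℝ)+1)/2^N) ∩ Set.Icc ((j:ℝ)/2^N) ((k:ℝ)/2^N)) := by
      rw [Measure.restrict_apply measurableSet_Ico, μ01,
        Measure.restrict_apply (measurableSet_Ico.inter measurableSet_Icc)]
      congr 1
      rw [Set.inter_eq_left]
      intro x hx
      exact Ico_subset_Icc01 hi' hx.1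
    by_cases hmem : i ∈ Finset.Ico j k
    · rw [if_pos hmem]
      obtain ⟨h1, h2⟩ := Finset.mem_Ico.mp hmem
      have hsub : Set.Ico ((i:ℝ)/2^N) (((i:ℝ)+1)/2^N) ⊆ Set.Icc ((j:ℝ)/2^N) ((k:ℝ)/2^N) := by
        intro x hx
        constructor
        · calc (j:ℝ)/2^N ≤ (i:ℝ)/2^N := by gcongr <;> exact_mod_cast h1
            _ ≤ x := hx.1
        · have hik : ((i:ℝ)+1)/2^N ≤ (k:ℝ)/2^N := by
            gcongr <;> exact_mod_cast Nat.succ_le_of_lt h2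
          linarith [hx.2]
      have hnn : (0:ℝ) ≤ ((i:ℝ)+1)/2^N - (i:ℝ)/2^N := by
        rw [div_sub_div_same]
        norm_num
      rw [hmeas, Set.inter_eq_left.mpr hsub, Real.volume_Ico,
        ENNReal.toReal_ofReal hnn]
      field_simp
      ring
    · rw [if_neg hmem]
      rw [Finset.mem_Ico, not_and_or, not_le, not_lt] at hmem
      have hz : volume (Set.Ico ((i:ℝ)/2^N) (((i:ℝ)+1)/2^N) ∩ Set.Icc ((j:ℝ)/2^N) ((k:ℝ)/2^N)) = 0 := by
        rcases hmem with hij | hki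
        · refine measure_mono_null ?_ (measure_empty (μ := volume))
          intro x hx
          have h1 : ((i:ℝ)+1)/2^N ≤ (j:ℝ)/2^N := by
            gcongr <;> exact_mod_cast Nat.succ_le_of_lt hij
          exact absurd (lt_of_lt_of_le hx.1.2 h1) (not_lt.mpr hx.2.1)
        · refine measure_mono_null (t := ({(k:ℝ)/2^N} : Set ℝ)) ?_ Real.volume_singleton
          intro x hx
          have h1 : (k:ℝ)/2^N ≤ (i:ℝ)/2^N := by gcongr <;> exact_mod_cast hki
          exact le_antisymm hx.2.2 (le_trans h1 hx.1.1)
      rw [hmeas, hz]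
      simp
  rw [Finset.sum_congr rfl hterm, Finset.sum_ite_mem]
  congr 1
  rw [Finset.inter_eq_right]
  intro x hx
  exact Finset.mem_range.mpr (lt_of_lt_of_le (Finset.mem_Ico.mp hx).2 hk)

lemma dist_le_dyadicSum (N j k : ℕ) (hjk : j ≤ k) :
    dist (γ ((j:ℝ)/2^N)) (γ ((k:ℝ)/2^N))
      ≤ ∑ i ∈ Finset.Ico j k, dist (γ ((i:ℝ)/2^N)) (γ (((i:ℝ)+1)/2^N)) := by
  calc dist (γ ((j:ℝ)/2^N)) (γ ((k:ℝ)/2^N))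
      = dist ((fun i => γ (((j+i : ℕ):ℝ)/2^N)) 0) ((fun i => γ (((j+i : ℕ):ℝ)/2^N)) (k-j)) := by
        simp [Nat.add_sub_cancel' hjk]
    _ ≤ ∑ i ∈ Finset.range (k-j), dist (γ (((j+i : ℕ):ℝ)/2^N)) (γ (((j+i+1 : ℕ):ℝ)/2^N)) :=
        by exact dist_le_range_sum_dist (fun i => γ (((j+i : ℕ):ℝ)/2^N)) (k-j)
    _ = ∑ i ∈ Finset.Ico j k, dist (γ ((i:ℝ)/2^N)) (γ (((i:ℝ)+1)/2^N)) := by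
        rw [Finset.sum_Ico_eq_sum_range]
        apply Finset.sum_congr rfl
        intro i _
        have hc : ((j+i+1 : ℕ):ℝ) = ((j+i:ℕ):ℝ) + 1 := by push_cast; ring
        rw [hc]


lemma dyadic_rescale {N M : ℕ} (hNM : N ≤ M) (j : ℕ) :
    ((j * 2^(M-N) : ℕ):ℝ)/2^M = (j:ℝ)/2^N := by
  have h2 : (2:ℝ)^M = 2^N * 2^(M-N) := by
    rw [← pow_add]
    congr 1
    omega
  push_cast
  rw [h2]
  have hp1 : ((2:ℝ)^N) ≠ 0 := by positivity
  have hp2 : ((2:ℝ)^(M-N)) ≠ 0 := by positivity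
  field_simp

lemma exists_L2_majorant (h : curveEnergy γ ≠ ⊤) :
    ∃ F : Lp ℝ 2 μ01, ∀ N j k : ℕ, j ≤ k → k ≤ 2^N →
      dist (γ ((j:ℝ)/2^N)) (γ ((k:ℝ)/2^N))
        ≤ ∫ x in Set.Icc ((j:ℝ)/2^N) ((k:ℝ)/2^N), (F : ℝ → ℝ) x ∂μ01 := by
  classical
  set H := (curveEnergy γ).toReal with hH
  have hH0 : 0 ≤ 2 * H := by positivity
  set R := Real.sqrt (2 * H) with hR
  set χ : ℕ → ℕ → ℕ → Lp ℝ 2 μ01 := fun N j k =>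
    indicatorConstLp 2 (measurableSet_Icc (a := ((j:ℝ)/2^N)) (b := ((k:ℝ)/2^N)))
      (measure_ne_top μ01 _) (1:ℝ) with hχ
  set Z : ℕ × ℕ × ℕ → Set (WeakDual ℝ (Lp ℝ 2 μ01)) := fun q =>
    if q.2.1 ≤ q.2.2 ∧ q.2.2 ≤ 2^q.1 then
      {φ | dist (γ ((q.2.1:ℝ)/2^q.1)) (γ ((q.2.2:ℝ)/2^q.1)) ≤ φ (χ q.1 q.2.1 q.2.2)}
    else Set.univ with hZ
  have hZclosed : ∀ q, IsClosed (Z q) := by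
    intro q
    rw [hZ]
    dsimp only
    split
    · exact isClosed_le continuous_const (WeakDual.eval_continuous _)
    · exact isClosed_univ
  have hcpt : IsCompact (WeakDual.toStrongDual ⁻¹' Metric.closedBall 0 R) :=
    WeakDual.isCompact_closedBall (𝕜 := ℝ) (E := Lp ℝ 2 μ01) 0 R
  have hFIP : ∀ u : Finset (ℕ × ℕ × ℕ),
      ((WeakDual.toStrongDual ⁻¹' Metric.closedBall 0 R) ∩ ⋂ q ∈ u, Z q).Nonempty := by
    intro u
    set M := u.sup (fun q => q.1) with hM
    set FM := (stepFn_memℒp γ M 2).toLp (stepFn γ M) with hFM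
    have hnormsq : ‖FM‖^2 ≤ 2 * H := by
      rw [← real_inner_self_eq_norm_sq]
      have hinner : (inner ℝ FM FM : ℝ) = ∫ x, (stepFn γ M x)^2 ∂μ01 := by
        rw [MeasureTheory.L2.inner_def]
        apply MeasureTheory.integral_congr_ae
        filter_upwards [MemLp.coeFn_toLp (stepFn_memℒp γ M 2)] with x hx
        rw [RCLike.inner_apply, starRingEnd_apply, star_trivial, hx]
        ring
      rw [hinner]
      exact stepFn_sq_integral γ h M
    have hnorm : ‖FM‖ ≤ R := by
      calc ‖FM‖ = Real.sqrt (‖FM‖^2) := (Real.sqrt_sq (norm_nonneg FM)).symm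
        _ ≤ R := Real.sqrt_le_sqrt hnormsq
    refine ⟨StrongDual.toWeakDual (InnerProductSpace.toDual ℝ _ FM), ?_, ?_⟩
    · simp only [Set.mem_preimage, Metric.mem_closedBall, dist_zero_right]
      show ‖InnerProductSpace.toDual ℝ _ FM‖ ≤ R
      rw [LinearIsometryEquiv.norm_map]
      exact hnorm
    · apply Set.mem_iInter₂.mpr
      rintro ⟨N, j, k⟩ hq
      have hNM : N ≤ M := Finset.le_sup (f := fun q : ℕ × ℕ × ℕ => q.1) hq
      rw [hZ]
      dsimp only
      split
      · rename_i hcond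
        obtain ⟨hjk, hk⟩ := hcond
        set j' := j * 2^(M-N) with hj'
        set k' := k * 2^(M-N) with hk'
        have hjj : ((j':ℕ):ℝ)/2^M = (j:ℝ)/2^N := dyadic_rescale hNM j
        have hkk : ((k':ℕ):ℝ)/2^M = (k:ℝ)/2^N := dyadic_rescale hNM k
        have hjk' : j' ≤ k' := Nat.mul_le_mul_right _ hjk
        have hk2' : k' ≤ 2^M := by
          rw [hk']
          calc k * 2^(M-N) ≤ 2^N * 2^(M-N) := Nat.mul_le_mul_right _ hk
            _ = 2^M := by rw [← pow_add]; congr 1; omega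
        show dist (γ ((j:ℝ)/2^N)) (γ ((k:ℝ)/2^N)) ≤ _
        have happ : (StrongDual.toWeakDual (InnerProductSpace.toDual ℝ _ FM)) (χ N j k)
            = ∫ x in Set.Icc ((j:ℝ)/2^N) ((k:ℝ)/2^N), stepFn γ M x ∂μ01 := by
          have e1 : (StrongDual.toWeakDual (InnerProductSpace.toDual ℝ _ FM)) (χ N j k)
              = (inner ℝ FM (χ N j k) : ℝ) := by
            rw [← InnerProductSpace.toDual_apply_apply]
            rfl
          rw [e1, real_inner_comm, hχ]
          rw [MeasureTheory.L2.inner_indicatorConstLp_one]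
          apply MeasureTheory.integral_congr_ae
          exact MeasureTheory.ae_restrict_of_ae (MemLp.coeFn_toLp (stepFn_memℒp γ M 2))
        rw [happ]
        rw [← hjj, ← hkk, stepFn_setIntegral γ M j' k' hjk' hk2']
        calc dist (γ (((j':ℕ):ℝ)/2^M)) (γ (((k':ℕ):ℝ)/2^M))
            ≤ ∑ i ∈ Finset.Ico j' k', dist (γ ((i:ℝ)/2^M)) (γ (((i:ℝ)+1)/2^M)) :=
              dist_le_dyadicSum γ M j' k' hjk'
          _ = _ := rfl
      · exact Set.mem_univ _
  obtain ⟨φ, hball, hmem⟩ := hcpt.inter_iInter_nonempty Z hZclosed hFIP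
  set F := (InnerProductSpace.toDual ℝ (Lp ℝ 2 μ01)).symm (WeakDual.toStrongDual φ) with hF
  refine ⟨F, ?_⟩
  intro N j k hjk hk
  have hmemq : φ ∈ Z (N, j, k) := Set.mem_iInter.mp hmem (N, j, k)
  rw [hZ] at hmemq
  dsimp only at hmemq
  rw [if_pos ⟨hjk, hk⟩] at hmemq
  have happ : φ (χ N j k) = ∫ x in Set.Icc ((j:ℝ)/2^N) ((k:ℝ)/2^N), (F : ℝ → ℝ) x ∂μ01 := by
    have e1 : φ (χ N j k) = (inner ℝ F (χ N j k) : ℝ) := by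
      rw [hF, InnerProductSpace.toDual_symm_apply]
      rfl
    rw [e1, real_inner_comm, hχ]
    exact MeasureTheory.L2.inner_indicatorConstLp_one _ _ _
  have hmemq' : dist (γ ((j:ℝ)/2^N)) (γ ((k:ℝ)/2^N)) ≤ φ (χ N j k) := hmemq
  rw [happ] at hmemq'
  exact hmemq'

end Aux

theorem energy_eq_top_of_not_AC2
    {X : Type*} [MetricSpace X] (γ : ℝ → X)
    (hcont : ContinuousOn γ (Set.Icc (0 : ℝ) 1))
    (hnotAC : ¬ ∃ m : ℝ → ℝ, MemLp m 2 (volume.restrict (Set.Icc (0 : ℝ) 1)) ∧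
      ∀ s t : ℝ, 0 ≤ s → s ≤ t → t ≤ 1 → dist (γ s) (γ t) ≤ ∫ r in s..t, m r) :
    curveEnergy γ = ⊤ := by
  by_contra hne
  obtain ⟨F, hF⟩ := exists_L2_majorant γ hne
  apply hnotAC
  set m : ℝ → ℝ := Set.indicator (Set.Icc (0:ℝ) 1) (fun x => |(F : ℝ → ℝ) x|) with hm
  have hmnn : ∀ x, 0 ≤ m x := fun x => Set.indicator_nonneg (fun y _ => abs_nonneg _) x
  have hmemF : MemLp (⇑F) 2 μ01 := Lp.memLp F
  have hmem_abs : MemLp (fun x => |(F : ℝ → ℝ) x|) 2 μ01 := by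
    simpa [Real.norm_eq_abs] using hmemF.norm
  have hmemm : MemLp m 2 μ01 := hmem_abs.indicator measurableSet_Icc
  have hIntF : Integrable (⇑F) μ01 := hmemF.integrable one_le_two
  have hIntm : Integrable m μ01 := hmemm.integrable one_le_two
  have hIntOn : IntegrableOn m (Set.Icc (0:ℝ) 1) volume := hIntm
  refine ⟨m, hmemm, ?_⟩
  intro s t hs0 hst ht1
  by_cases hst' : s = t
  · subst hst'
    simp
  have hlt : s < t := lt_of_le_of_ne hst hst'
  set a : ℕ → ℝ := fun N => ((⌈s * 2^N⌉₊ : ℕ):ℝ)/2^N with ha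
  set b : ℕ → ℝ := fun N => ((⌊t * 2^N⌋₊ : ℕ):ℝ)/2^N with hb
  have hpow : ∀ N : ℕ, (0:ℝ) < 2^N := fun N => by positivity
  have haN_ge : ∀ N, s ≤ a N := by
    intro N
    rw [ha]
    dsimp only
    rw [le_div_iff₀ (hpow N)]
    exact Nat.le_ceil _
  have haN_le1 : ∀ N, a N ≤ 1 := by
    intro N
    rw [ha]
    dsimp only
    rw [div_le_one (hpow N)]
    have h1 : ⌈s * 2^N⌉₊ ≤ 2^N := by
      apply Nat.ceil_le.mpr
      calc s * 2^N ≤ 1 * 2^N := mul_le_mul_of_nonneg_right (le_trans hst ht1) (le_of_lt (hpow N))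
        _ = ((2^N : ℕ):ℝ) := by push_cast; ring
    calc ((⌈s * 2^N⌉₊:ℕ):ℝ) ≤ ((2^N:ℕ):ℝ) := by exact_mod_cast h1
      _ = (2:ℝ)^N := by push_cast; ring
  have haN_le : ∀ N, a N ≤ s + 1/2^N := by
    intro N
    rw [ha]
    dsimp only
    rw [div_le_iff₀ (hpow N)]
    have h1 : ((⌈s * 2^N⌉₊:ℕ):ℝ) < s * 2^N + 1 :=
      Nat.ceil_lt_add_one (by positivity)
    have h2 : (s + 1/2^N) * 2^N = s * 2^N + 1 := by field_simp
    rw [h2]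
    exact le_of_lt h1
  have hbN_le : ∀ N, b N ≤ t := by
    intro N
    rw [hb]
    dsimp only
    rw [div_le_iff₀ (hpow N)]
    exact Nat.floor_le (mul_nonneg (le_trans hs0 hst) (le_of_lt (hpow N)))
  have hbN_ge : ∀ N, t - 1/2^N ≤ b N := by
    intro N
    rw [hb]
    dsimp only
    rw [le_div_iff₀ (hpow N)]
    have h1 : t * 2^N < ((⌊t * 2^N⌋₊:ℕ):ℝ) + 1 := Nat.lt_floor_add_one _
    have h2 : (t - 1/2^N) * 2^N = t * 2^N - 1 := by field_simp
    rw [h2]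
    linarith
  have hbN_k : ∀ N, ⌊t * 2^N⌋₊ ≤ 2^N := by
    intro N
    have h1 : t * 2^N ≤ ((2^N : ℕ):ℝ) := by
      push_cast
      calc t * 2^N ≤ 1 * 2^N := mul_le_mul_of_nonneg_right ht1 (le_of_lt (hpow N))
        _ = 2^N := one_mul _
    calc ⌊t * 2^N⌋₊ ≤ ⌊((2^N : ℕ):ℝ)⌋₊ := Nat.floor_le_floor h1
      _ = 2^N := Nat.floor_natCast _
  -- eventual inequality a N ≤ b N
  have hhalf : Filter.Tendsto (fun N : ℕ => (1:ℝ)/2^N) Filter.atTop (nhds 0) := by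
    have : (fun N : ℕ => (1:ℝ)/2^N) = fun N : ℕ => ((1:ℝ)/2)^N := by
      funext N
      rw [div_pow, one_pow]
    rw [this]
    exact tendsto_pow_atTop_nhds_zero_of_lt_one (by norm_num) (by norm_num)
  have hev : ∀ᶠ N in Filter.atTop, (1:ℝ)/2^N < (t - s)/2 :=
    hhalf.eventually_lt_const (by linarith)
  have hab : ∀ᶠ N in Filter.atTop, a N ≤ b N := by
    filter_upwards [hev] with N hN
    have := haN_le N
    have := hbN_ge N
    linarith
  -- eventual bound
  have hbound : ∀ᶠ N in Filter.atTop,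
      dist (γ (a N)) (γ (b N)) ≤ ∫ r in s..t, m r := by
    filter_upwards [hab] with N habN
    have hjk : ⌈s * 2^N⌉₊ ≤ ⌊t * 2^N⌋₊ := by
      have h1 : ((⌈s * 2^N⌉₊:ℕ):ℝ) ≤ ((⌊t * 2^N⌋₊:ℕ):ℝ) := by
        have := habN
        rw [ha, hb] at this
        dsimp only at this
        exact (div_le_div_iff_of_pos_right (hpow N)).mp this
      exact_mod_cast h1
    have hkey : dist (γ (a N)) (γ (b N))
        ≤ ∫ x in Set.Icc (a N) (b N), (F : ℝ → ℝ) x ∂μ01 :=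
      hF N ⌈s * 2^N⌉₊ ⌊t * 2^N⌋₊ hjk (hbN_k N)
    have hsub01 : Set.Icc (a N) (b N) ⊆ Set.Icc (0:ℝ) 1 := fun x hx =>
      ⟨le_trans (le_trans hs0 (haN_ge N)) hx.1,
       le_trans hx.2 (le_trans (hbN_le N) ht1)⟩
    have step1 : ∫ x in Set.Icc (a N) (b N), (F : ℝ → ℝ) x ∂μ01
        ≤ ∫ x in Set.Icc (a N) (b N), m x ∂μ01 := by
      apply MeasureTheory.integral_mono_ae (hIntF.restrict) (hIntm.restrict)
      have hx01 : ∀ᵐ x ∂(μ01.restrict (Set.Icc (a N) (b N))), x ∈ Set.Icc (0:ℝ) 1 :=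
        Filter.Eventually.filter_mono
          (MeasureTheory.ae_mono Measure.restrict_le_self)
          (MeasureTheory.ae_restrict_mem measurableSet_Icc)
      filter_upwards [hx01] with x hx
      rw [hm]
      calc (F : ℝ → ℝ) x ≤ |(F : ℝ → ℝ) x| := le_abs_self _
        _ = Set.indicator (Set.Icc (0:ℝ) 1) (fun y => |(F : ℝ → ℝ) y|) x :=
          (Set.indicator_of_mem hx (fun y => |(F : ℝ → ℝ) y|)).symm
    have hres : μ01.restrict (Set.Icc (a N) (b N)) = volume.restrict (Set.Icc (a N) (b N)) := by
      rw [μ01, Measure.restrict_restrict measurableSet_Icc,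
        Set.inter_eq_left.mpr hsub01]
    have step2 : ∫ x in Set.Icc (a N) (b N), m x ∂μ01 = ∫ r in (a N)..(b N), m r := by
      rw [hres, MeasureTheory.integral_Icc_eq_integral_Ioc,
        intervalIntegral.integral_of_le habN]
    have hInterval : IntervalIntegrable m volume s t := by
      constructor
      · apply hIntOn.mono_set
        intro x hx
        exact ⟨le_trans hs0 (le_of_lt hx.1), le_trans hx.2 ht1⟩
      · apply hIntOn.mono_set
        rw [Set.Ioc_eq_empty (not_lt.mpr hst)]
        exact Set.empty_subset _
    have step3 : ∫ r in (a N)..(b N), m r ≤ ∫ r in s..t, m r :=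
      intervalIntegral.integral_mono_interval (haN_ge N) habN (hbN_le N)
        (Filter.Eventually.of_forall fun x => hmnn x) hInterval
    calc dist (γ (a N)) (γ (b N))
        ≤ ∫ x in Set.Icc (a N) (b N), (F : ℝ → ℝ) x ∂μ01 := hkey
      _ ≤ ∫ x in Set.Icc (a N) (b N), m x ∂μ01 := step1
      _ = ∫ r in (a N)..(b N), m r := step2
      _ ≤ ∫ r in s..t, m r := step3
  -- limit
  have haTend : Filter.Tendsto a Filter.atTop (nhds s) := by
    apply tendsto_of_tendsto_of_tendsto_of_le_of_le tendsto_const_nhds ?_ haN_ge haN_le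
    have := Filter.Tendsto.add (tendsto_const_nhds (x := s) (f := Filter.atTop (α := ℕ))) hhalf
    simpa using this
  have hbTend : Filter.Tendsto b Filter.atTop (nhds t) := by
    apply tendsto_of_tendsto_of_tendsto_of_le_of_le ?_ tendsto_const_nhds hbN_ge hbN_le
    have := Filter.Tendsto.sub (tendsto_const_nhds (x := t) (f := Filter.atTop (α := ℕ))) hhalf
    simpa using this
  have hγa : Filter.Tendsto (fun N => γ (a N)) Filter.atTop (nhds (γ s)) := by
    apply (hcont s ⟨hs0, le_trans hst ht1⟩).tendsto.comp
    rw [tendsto_nhdsWithin_iff]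
    exact ⟨haTend, Filter.Eventually.of_forall fun N =>
      ⟨le_trans hs0 (haN_ge N), haN_le1 N⟩⟩
  have hγb : Filter.Tendsto (fun N => γ (b N)) Filter.atTop (nhds (γ t)) := by
    apply (hcont t ⟨le_trans hs0 hst, ht1⟩).tendsto.comp
    rw [tendsto_nhdsWithin_iff]
    refine ⟨hbTend, Filter.Eventually.of_forall fun N => ⟨?_, le_trans (hbN_le N) ht1⟩⟩
    rw [hb]
    dsimp only
    positivity
  exact le_of_tendsto (hγa.dist hγb) hbound
end

section
/- Let (X,d) be a metric space and γ ∈ AC²([0,1],X) with metric derivative |γ̇|. Then H(γ) = H̃(γ), where H(γ) is the supremum over all finite partitions Δ = {0=t₀<…<tₙ=1} of (1/2)Σ_i d²(γ(tᵢ),γ(t_{i+1}))/(t_{i+1}−tᵢ), and H̃(γ) = (1/2)∫₀¹ |γ̇|(r)² dr. -/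
open MeasureTheory intervalIntegral ENNReal Filter

lemma my_lintegral_sq {α : Type*} [MeasurableSpace α] (ν : Measure α) (f : α → ℝ≥0∞)
    (hf : AEMeasurable f ν) :
    (∫⁻ a, f a ∂ν) ^ 2 ≤ (∫⁻ a, f a ^ 2 ∂ν) * ν Set.univ := by
  have hpq : Real.HolderConjugate 2 2 := Real.HolderConjugate.two_two
  have h := ENNReal.lintegral_mul_le_Lp_mul_Lq ν hpq hf
    (aemeasurable_const (b := (1:ℝ≥0∞)))
  simp only [Pi.mul_apply, mul_one, one_mul, ENNReal.one_rpow, lintegral_const] at h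
  have h3 : ∀ x : ℝ≥0∞, (x ^ (1/(2:ℝ))) ^ 2 = x := by
    intro x
    rw [← ENNReal.rpow_natCast (x ^ (1/(2:ℝ))) 2, ← ENNReal.rpow_mul]
    norm_num
  calc (∫⁻ a, f a ∂ν) ^ 2 ≤ _ := pow_le_pow_left' h 2
    _ = (∫⁻ a, f a ^ (2:ℝ) ∂ν) * ν Set.univ := by rw [mul_pow, h3, h3]
    _ = (∫⁻ a, f a ^ 2 ∂ν) * ν Set.univ := by
        congr 1
        apply lintegral_congr fun a => ?_
        rw [← ENNReal.rpow_natCast (f a) 2]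
        norm_num

lemma my_translate (φ : ℝ → ℝ≥0∞) (c a b : ℝ) :
    ∫⁻ s in Set.Ioc a b, φ (s + c) = ∫⁻ t in Set.Ioc (a + c) (b + c), φ t := by
  have hp : MeasurePreserving (fun x : ℝ => x + c) volume volume :=
    measurePreserving_add_right volume c
  have he : MeasurableEmbedding (fun x : ℝ => x + c) :=
    (Homeomorph.addRight c).measurableEmbedding
  have h := hp.setLIntegral_comp_preimage_emb he φ (Set.Ioc (a + c) (b + c))
  rw [show (fun x : ℝ => x + c) ⁻¹' (Set.Ioc (a + c) (b + c)) = Set.Ioc a b by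
    rw [Set.preimage_add_const_Ioc]; congr 1 <;> ring] at h
  exact h

lemma my_Ioc_subset_iUnion (N : ℕ) (h : ℝ) (h0 : 0 ≤ h) :
    Set.Ioc (0:ℝ) (N * h) ⊆ ⋃ k : Fin N, Set.Ioc ((k:ℝ) * h) (((k:ℝ) + 1) * h) := by
  induction N with
  | zero => simp
  | succ N ih =>
    push_cast
    have key : Set.Ioc (0:ℝ) (((N:ℝ)+1) * h) ⊆
        Set.Ioc (0:ℝ) (N * h) ∪ Set.Ioc ((N:ℝ)*h) (((N:ℝ)+1)*h) := by
      rw [Set.Ioc_union_Ioc_eq_Ioc (by positivity) (by nlinarith)]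
    refine key.trans (Set.union_subset ?_ ?_)
    · refine ih.trans ?_
      intro x hx
      simp only [Set.mem_iUnion] at hx ⊢
      obtain ⟨k, hk⟩ := hx
      exact ⟨k.castSucc, by simpa using hk⟩
    · intro x hx
      simp only [Set.mem_iUnion]
      exact ⟨Fin.last N, by simpa using hx⟩

lemma my_contOn {X : Type*} [MetricSpace X] (γ : ℝ → X) (γ' : ℝ → ℝ)
    (hint : IntegrableOn γ' (Set.Icc (0:ℝ) 1) volume)
    (hmaj : ∀ s t : ℝ, 0 ≤ s → s ≤ t → t ≤ 1 → dist (γ s) (γ t) ≤ ∫ r in s..t, γ' r) :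
    ContinuousOn γ (Set.Icc (0:ℝ) 1) := by
  set Φ : ℝ → ℝ := fun u => ∫ r in (0:ℝ)..u, γ' r with hΦdef
  have hΦ : ContinuousOn Φ (Set.Icc (0:ℝ) 1) := by
    have h := intervalIntegral.continuousOn_primitive_interval (a := (0:ℝ)) (b := 1)
      (f := γ') (μ := volume) (by rwa [Set.uIcc_of_le zero_le_one])
    rwa [Set.uIcc_of_le zero_le_one] at h
  have hii : ∀ b ∈ Set.Icc (0:ℝ) 1, IntervalIntegrable γ' volume 0 b := by
    intro b hb
    apply MeasureTheory.IntegrableOn.intervalIntegrable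
    apply hint.mono_set
    rw [Set.uIcc_of_le hb.1]
    exact Set.Icc_subset_Icc le_rfl hb.2
  have key : ∀ a ∈ Set.Icc (0:ℝ) 1, ∀ b ∈ Set.Icc (0:ℝ) 1,
      dist (γ b) (γ a) ≤ |Φ b - Φ a| := by
    intro a ha b hb
    rcases le_total a b with hab | hab
    · have h1 : dist (γ b) (γ a) ≤ ∫ r in a..b, γ' r := by
        rw [dist_comm]; exact hmaj a b ha.1 hab hb.2
      have h2 : Φ b - Φ a = ∫ r in a..b, γ' r :=
        integral_interval_sub_left (hii b hb) (hii a ha)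
      calc dist (γ b) (γ a) ≤ ∫ r in a..b, γ' r := h1
        _ = Φ b - Φ a := h2.symm
        _ ≤ |Φ b - Φ a| := le_abs_self _
    · have h1 : dist (γ b) (γ a) ≤ ∫ r in b..a, γ' r := hmaj b a hb.1 hab ha.2
      have h2 : Φ a - Φ b = ∫ r in b..a, γ' r :=
        integral_interval_sub_left (hii a ha) (hii b hb)
      calc dist (γ b) (γ a) ≤ ∫ r in b..a, γ' r := h1
        _ = Φ a - Φ b := h2.symm
        _ ≤ |Φ b - Φ a| := by rw [abs_sub_comm]; exact le_abs_self _
  intro a ha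
  rw [ContinuousWithinAt, tendsto_iff_dist_tendsto_zero]
  apply squeeze_zero' (Eventually.of_forall fun _ => dist_nonneg)
  · filter_upwards [self_mem_nhdsWithin] with b hb
    exact key a ha b hb
  · have h0 : Tendsto (fun b => Φ b - Φ a) (nhdsWithin a (Set.Icc 0 1)) (nhds 0) := by
      have h1 : ContinuousWithinAt (fun b => Φ b - Φ a) (Set.Icc 0 1) a :=
        (hΦ a ha).sub continuousWithinAt_const
      have h2 : Tendsto (fun b => Φ b - Φ a) (nhdsWithin a (Set.Icc 0 1))
          (nhds (Φ a - Φ a)) := h1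
      rwa [sub_self] at h2
    have := h0.abs
    simpa using this

lemma my_interval_bound {X : Type*} [MetricSpace X] (γ : ℝ → X) (γ' : ℝ → ℝ)
    (hnn : ∀ r, 0 ≤ γ' r)
    (hint : IntegrableOn γ' (Set.Icc (0:ℝ) 1) volume)
    (hmaj : ∀ s t : ℝ, 0 ≤ s → s ≤ t → t ≤ 1 → dist (γ s) (γ t) ≤ ∫ r in s..t, γ' r)
    {a b : ℝ} (hab : a < b) (ha : 0 ≤ a) (hb : b ≤ 1) :
    ENNReal.ofReal (dist (γ a) (γ b) ^ 2 / (b - a)) ≤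
      ∫⁻ r in Set.Ioc a b, ENNReal.ofReal (γ' r ^ 2) ∂volume := by
  have hsub : Set.Ioc a b ⊆ Set.Icc (0:ℝ) 1 := fun x hx => ⟨ha.trans hx.1.le, hx.2.trans hb⟩
  have hint' : IntegrableOn γ' (Set.Ioc a b) volume := hint.mono_set hsub
  have hd : dist (γ a) (γ b) ≤ ∫ r in a..b, γ' r := hmaj a b ha hab.le hb
  have step1 : ENNReal.ofReal (dist (γ a) (γ b)) ≤
      ∫⁻ r in Set.Ioc a b, ENNReal.ofReal (γ' r) ∂volume := by
    have he : ENNReal.ofReal (∫ r in Set.Ioc a b, γ' r ∂volume) =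
        ∫⁻ r in Set.Ioc a b, ENNReal.ofReal (γ' r) ∂volume :=
      ofReal_integral_eq_lintegral_ofReal hint'
        (Filter.Eventually.of_forall fun x => hnn x)
    rw [← he]
    apply ENNReal.ofReal_le_ofReal
    rwa [intervalIntegral.integral_of_le hab.le] at hd
  have haem : AEMeasurable (fun r => ENNReal.ofReal (γ' r)) (volume.restrict (Set.Ioc a b)) :=
    ENNReal.measurable_ofReal.comp_aemeasurable hint'.aestronglyMeasurable.aemeasurable
  have hCS := my_lintegral_sq (volume.restrict (Set.Ioc a b)) _ haem
  rw [Measure.restrict_apply_univ, Real.volume_Ioc] at hCS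
  have hpos : (0:ℝ) < b - a := sub_pos.2 hab
  have hsq : (fun r => ENNReal.ofReal (γ' r) ^ 2) = fun r => ENNReal.ofReal (γ' r ^ 2) := by
    funext r; rw [ENNReal.ofReal_pow (hnn r)]
  calc ENNReal.ofReal (dist (γ a) (γ b) ^ 2 / (b - a))
      = ENNReal.ofReal (dist (γ a) (γ b) ^ 2) / ENNReal.ofReal (b - a) :=
        ENNReal.ofReal_div_of_pos hpos
    _ = ENNReal.ofReal (dist (γ a) (γ b)) ^ 2 / ENNReal.ofReal (b - a) := by
        rw [ENNReal.ofReal_pow dist_nonneg]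
    _ ≤ (∫⁻ r in Set.Ioc a b, ENNReal.ofReal (γ' r) ∂volume) ^ 2 / ENNReal.ofReal (b - a) :=
        ENNReal.div_le_div_right (pow_le_pow_left' step1 2) _
    _ ≤ ((∫⁻ r in Set.Ioc a b, ENNReal.ofReal (γ' r) ^ 2 ∂volume) * ENNReal.ofReal (b - a)) /
          ENNReal.ofReal (b - a) := ENNReal.div_le_div_right hCS _
    _ = ∫⁻ r in Set.Ioc a b, ENNReal.ofReal (γ' r) ^ 2 ∂volume := by
        rw [mul_div_assoc, ENNReal.div_self (ENNReal.ofReal_pos.2 hpos).ne' ENNReal.ofReal_ne_top, mul_one]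
    _ = ∫⁻ r in Set.Ioc a b, ENNReal.ofReal (γ' r ^ 2) ∂volume := by rw [hsq]

lemma my_upper {X : Type*} [MetricSpace X] (γ : ℝ → X) (γ' : ℝ → ℝ)
    (hnn : ∀ r, 0 ≤ γ' r)
    (hint : IntegrableOn γ' (Set.Icc (0:ℝ) 1) volume)
    (hmaj : ∀ s t : ℝ, 0 ≤ s → s ≤ t → t ≤ 1 → dist (γ s) (γ t) ≤ ∫ r in s..t, γ' r)
    (n : ℕ) (t : Fin (n + 1) → ℝ) (ht : StrictMono t) (h0 : t 0 = 0)
    (h1 : t (Fin.last n) = 1) :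
    ENNReal.ofReal (∑ i : Fin n,
        dist (γ (t i.castSucc)) (γ (t i.succ)) ^ 2 / (t i.succ - t i.castSucc)) ≤
      ∫⁻ r in Set.Icc (0:ℝ) 1, ENNReal.ofReal (γ' r ^ 2) ∂volume := by
  have hlt : ∀ i : Fin n, t i.castSucc < t i.succ := fun i => ht (Fin.castSucc_lt_succ (i := i))
  have hge : ∀ i : Fin n, 0 ≤ t i.castSucc := fun i => by
    rw [← h0]; exact ht.monotone (Fin.zero_le _)
  have hle : ∀ i : Fin n, t i.succ ≤ 1 := fun i => by
    rw [← h1]; exact ht.monotone (Fin.le_last _)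
  rw [ENNReal.ofReal_sum_of_nonneg (fun i _ =>
    div_nonneg (sq_nonneg _) (sub_pos.2 (hlt i)).le)]
  have hdisj : Set.PairwiseDisjoint (↑(Finset.univ : Finset (Fin n)))
      (fun i : Fin n => Set.Ioc (t i.castSucc) (t i.succ)) := by
    intro i _ j _ hij
    simp only [Function.onFun]
    rcases hij.lt_or_gt with h | h
    · rw [Set.Ioc_disjoint_Ioc]
      have hvv : (i:ℕ) < (j:ℕ) := h
      have : t i.succ ≤ t j.castSucc := ht.monotone (by
        rw [Fin.le_def, Fin.val_succ, Fin.coe_castSucc]; omega)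
      exact le_trans (min_le_left _ _) (this.trans (le_max_right _ _))
    · rw [Set.Ioc_disjoint_Ioc]
      have hvv : (j:ℕ) < (i:ℕ) := h
      have : t j.succ ≤ t i.castSucc := ht.monotone (by
        rw [Fin.le_def, Fin.val_succ, Fin.coe_castSucc]; omega)
      exact le_trans (min_le_right _ _) (this.trans (le_max_left _ _))
  calc ∑ i : Fin n, ENNReal.ofReal
        (dist (γ (t i.castSucc)) (γ (t i.succ)) ^ 2 / (t i.succ - t i.castSucc))
      ≤ ∑ i : Fin n, ∫⁻ r in Set.Ioc (t i.castSucc) (t i.succ),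
          ENNReal.ofReal (γ' r ^ 2) ∂volume :=
        Finset.sum_le_sum fun i _ =>
          my_interval_bound γ γ' hnn hint hmaj (hlt i) (hge i) (hle i)
    _ = ∫⁻ r in ⋃ i ∈ (Finset.univ : Finset (Fin n)),
          Set.Ioc (t i.castSucc) (t i.succ), ENNReal.ofReal (γ' r ^ 2) ∂volume :=
        (lintegral_biUnion_finset hdisj (fun i _ => measurableSet_Ioc) _).symm
    _ ≤ ∫⁻ r in Set.Icc (0:ℝ) 1, ENNReal.ofReal (γ' r ^ 2) ∂volume := by
        apply lintegral_mono_set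
        apply Set.iUnion₂_subset
        intro i _
        exact fun x hx => ⟨(hge i).trans hx.1.le, hx.2.trans (hle i)⟩

lemma my_sum_bound {X : Type*} [MetricSpace X] (γ : ℝ → X) (N : ℕ) {s : ℝ}
    (hs0 : 0 < s) (hsh : s < ((N:ℝ)+1)⁻¹) :
    ∑ k : Fin N, ENNReal.ofReal ((((N:ℝ)+1) *
        dist (γ (s + (k:ℝ) * ((N:ℝ)+1)⁻¹)) (γ (s + (k:ℝ) * ((N:ℝ)+1)⁻¹ + ((N:ℝ)+1)⁻¹))) ^ 2)
      ≤ ENNReal.ofReal ((N:ℝ)+1) * (2 * curveEnergy γ) := by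
  set h : ℝ := ((N:ℝ)+1)⁻¹ with hh
  have hNpos : (0:ℝ) < (N:ℝ)+1 := by positivity
  have hpos : 0 < h := by positivity
  have hNh : ((N:ℝ)+1) * h = 1 := mul_inv_cancel₀ hNpos.ne'
  -- the partition
  set u : Fin (N+3) → ℝ := fun j =>
    if (j:ℕ) = 0 then 0 else if (j:ℕ) = N+2 then 1 else s + (((j:ℕ) - 1 : ℕ) : ℝ) * h with hu
  have hu0 : u 0 = 0 := by simp [hu]
  have hulast : u (Fin.last (N+2)) = 1 := by simp [hu, Fin.last]
  have humid : ∀ j : Fin (N+3), 1 ≤ (j:ℕ) → (j:ℕ) ≤ N+1 →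
      u j = s + (((j:ℕ) - 1 : ℕ) : ℝ) * h := by
    intro j h1 h2
    simp only [hu]
    rw [if_neg (by omega), if_neg (by omega)]
  have hsm : StrictMono u := by
    rw [Fin.strictMono_iff_lt_succ]
    intro i
    have hiv : (i:ℕ) ≤ N+1 := by omega
    have hcv : ((i.castSucc : Fin (N+3)):ℕ) = (i:ℕ) := rfl
    have hsv : ((i.succ : Fin (N+3)):ℕ) = (i:ℕ)+1 := rfl
    rcases Nat.eq_zero_or_pos (i:ℕ) with h0 | hpos'
    · rcases Nat.lt_or_ge ((i:ℕ)+1) (N+2) with hlt | hge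
      · have e1 : u i.castSucc = 0 := by simp only [hu]; rw [if_pos (hcv.trans h0)]
        have e2 : u i.succ = s + (((i:ℕ)+1-1:ℕ):ℝ) * h :=
          humid i.succ (by omega) (by omega)
        rw [e1, e2, h0]
        simpa using hs0
      · -- (i:ℕ)+1 = N+2, so N+1 = (i:ℕ) = 0, N = 0 contradiction? no: N+1 ≤ i+1 means i ≥ N+1
        have : (i:ℕ) = N+1 := by omega
        omega
    · rcases Nat.lt_or_ge ((i:ℕ)+1) (N+2) with hlt | hge
      · have e1 : u i.castSucc = s + (((i:ℕ)-1:ℕ):ℝ) * h := humid i.castSucc (by omega) (by omega)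
        have e2 : u i.succ = s + (((i:ℕ)+1-1:ℕ):ℝ) * h := humid i.succ (by omega) (by omega)
        rw [e1, e2]
        have : (((i:ℕ)-1:ℕ):ℝ) < (((i:ℕ)+1-1:ℕ):ℝ) := by
          have : ((i:ℕ)-1:ℕ) < ((i:ℕ)+1-1:ℕ) := by omega
          exact_mod_cast this
        nlinarith
      · have hiN : (i:ℕ) = N+1 := by omega
        have e1 : u i.castSucc = s + (((i:ℕ)-1:ℕ):ℝ) * h := humid i.castSucc (by omega) (by omega)
        have e2 : u i.succ = 1 := by
          have hv : ((i.succ : Fin (N+3)):ℕ) = N+2 := by omega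
          simp only [hu]
          rw [if_neg (by omega), if_pos hv]
        rw [e1, e2, hiN]
        have hc : ((N+1-1:ℕ):ℝ) = (N:ℝ) := by push_cast [Nat.add_sub_cancel]; ring
        rw [hc]
        nlinarith
  -- partition energy sum
  set T : ℝ := ∑ i : Fin (N+2),
    dist (γ (u i.castSucc)) (γ (u i.succ)) ^ 2 / (u i.succ - u i.castSucc) with hT
  -- middle-term sum is at most T
  have hsub : ∑ k : Fin N,
      dist (γ (s + (k:ℝ)*h)) (γ (s + (k:ℝ)*h + h)) ^ 2 / h ≤ T := by
    set e : Fin N ↪ Fin (N+2) :=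
      ⟨fun k => ⟨(k:ℕ)+1, by omega⟩, by
        intro a b hab
        have : (a:ℕ)+1 = (b:ℕ)+1 := congrArg Fin.val hab
        exact Fin.ext (by omega)⟩ with he
    have hterm : ∀ k : Fin N,
        dist (γ (u (e k).castSucc)) (γ (u (e k).succ)) ^ 2
          / (u (e k).succ - u (e k).castSucc)
        = dist (γ (s + (k:ℝ)*h)) (γ (s + (k:ℝ)*h + h)) ^ 2 / h := by
      intro k
      have hkN : (k:ℕ) < N := k.isLt
      have hv1 : (((e k).castSucc : Fin (N+3)):ℕ) = (k:ℕ)+1 := rfl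
      have hv2 : (((e k).succ : Fin (N+3)):ℕ) = (k:ℕ)+2 := rfl
      have e1 : u (e k).castSucc = s + ((k:ℕ):ℝ) * h := by
        rw [humid _ (by omega) (by omega), hv1]
        norm_num
      have e2 : u (e k).succ = s + (((k:ℕ):ℝ)+1) * h := by
        rw [humid _ (by omega) (by omega), hv2]
        have : ((k:ℕ)+2-1 : ℕ) = (k:ℕ)+1 := by omega
        rw [this]
        push_cast
        ring
      rw [e1, e2]
      have : s + (((k:ℕ):ℝ)+1) * h - (s + ((k:ℕ):ℝ) * h) = h := by ring
      rw [this]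
      congr 2
      ring
    calc ∑ k : Fin N, dist (γ (s + (k:ℝ)*h)) (γ (s + (k:ℝ)*h + h)) ^ 2 / h
        = ∑ k : Fin N, dist (γ (u (e k).castSucc)) (γ (u (e k).succ)) ^ 2
            / (u (e k).succ - u (e k).castSucc) := by
          exact Finset.sum_congr rfl fun k _ => (hterm k).symm
      _ = ∑ i ∈ Finset.univ.map e, dist (γ (u i.castSucc)) (γ (u i.succ)) ^ 2
            / (u i.succ - u i.castSucc) :=
          (Finset.sum_map Finset.univ e (fun i => dist (γ (u i.castSucc)) (γ (u i.succ)) ^ 2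
            / (u i.succ - u i.castSucc))).symm
      _ ≤ T := by
          apply Finset.sum_le_sum_of_subset_of_nonneg (Finset.subset_univ _)
          intro i _ _
          have := hsm (Fin.castSucc_lt_succ (i := i))
          exact div_nonneg (sq_nonneg _) (sub_pos.2 this).le
  -- relate to curveEnergy
  have hE : ENNReal.ofReal ((1/2) * T) ≤ curveEnergy γ := by
    unfold curveEnergy
    apply le_iSup_of_le (N+2)
    apply le_iSup_of_le u
    exact le_iSup_of_le ⟨hsm, hu0, hulast⟩ le_rfl
  have hTle : ENNReal.ofReal T ≤ 2 * curveEnergy γ := by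
    have h2 : ENNReal.ofReal T = ENNReal.ofReal 2 * ENNReal.ofReal ((1/2) * T) := by
      rw [← ENNReal.ofReal_mul (by norm_num)]
      congr 1
      ring
    rw [h2, ENNReal.ofReal_ofNat]
    exact mul_le_mul_right hE 2
  -- final chain
  have hTnn : 0 ≤ ∑ k : Fin N, dist (γ (s + (k:ℝ)*h)) (γ (s + (k:ℝ)*h + h)) ^ 2 / h :=
    Finset.sum_nonneg fun k _ => by positivity
  calc ∑ k : Fin N, ENNReal.ofReal ((((N:ℝ)+1) *
          dist (γ (s + (k:ℝ) * h)) (γ (s + (k:ℝ) * h + h))) ^ 2)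
      = ENNReal.ofReal (∑ k : Fin N, (((N:ℝ)+1) *
          dist (γ (s + (k:ℝ) * h)) (γ (s + (k:ℝ) * h + h))) ^ 2) :=
        (ENNReal.ofReal_sum_of_nonneg fun k _ => sq_nonneg _).symm
    _ = ENNReal.ofReal (((N:ℝ)+1) * ∑ k : Fin N,
          dist (γ (s + (k:ℝ)*h)) (γ (s + (k:ℝ)*h + h)) ^ 2 / h) := by
        congr 1
        rw [Finset.mul_sum]
        apply Finset.sum_congr rfl fun k _ => ?_
        have hne : (N:ℝ)+1 ≠ 0 := hNpos.ne'
        rw [hh]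
        field_simp
    _ = ENNReal.ofReal ((N:ℝ)+1) * ENNReal.ofReal (∑ k : Fin N,
          dist (γ (s + (k:ℝ)*h)) (γ (s + (k:ℝ)*h + h)) ^ 2 / h) :=
        ENNReal.ofReal_mul hNpos.le
    _ ≤ ENNReal.ofReal ((N:ℝ)+1) * ENNReal.ofReal T :=
        mul_le_mul_right (ENNReal.ofReal_le_ofReal hsub) _
    _ ≤ ENNReal.ofReal ((N:ℝ)+1) * (2 * curveEnergy γ) := mul_le_mul_right hTle _
lemma my_phi_cont {X : Type*} [MetricSpace X] {γ : ℝ → X}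
    (hcont : ContinuousOn γ (Set.Icc (0:ℝ) 1)) {h : ℝ} (hp : 0 < h) (hle : h ≤ 1) (c : ℝ) :
    ContinuousOn (fun t : ℝ => ENNReal.ofReal ((c * dist (γ t) (γ (t + h))) ^ 2))
      (Set.Ioc (0:ℝ) (1 - h)) := by
  have hm1 : Set.MapsTo (fun t : ℝ => t) (Set.Ioc (0:ℝ) (1-h)) (Set.Icc (0:ℝ) 1) :=
    fun x hx => ⟨hx.1.le, hx.2.trans (by linarith)⟩
  have hm2 : Set.MapsTo (fun t : ℝ => t + h) (Set.Ioc (0:ℝ) (1-h)) (Set.Icc (0:ℝ) 1) := by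
    intro x hx
    have h1 := hx.1
    have h2 := hx.2
    constructor
    · show (0:ℝ) ≤ x + h
      linarith
    · show x + h ≤ 1
      linarith
  have hc1 : ContinuousOn (fun t : ℝ => γ t) (Set.Ioc (0:ℝ) (1-h)) :=
    hcont.comp (continuousOn_id) hm1
  have hc2 : ContinuousOn (fun t : ℝ => γ (t + h)) (Set.Ioc (0:ℝ) (1-h)) :=
    hcont.comp ((continuous_id.add continuous_const).continuousOn) hm2
  have hdist : ContinuousOn (fun t : ℝ => dist (γ t) (γ (t + h))) (Set.Ioc (0:ℝ) (1-h)) :=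
    continuous_dist.comp_continuousOn (hc1.prodMk hc2)
  have hd : ContinuousOn (fun t : ℝ => (c * dist (γ t) (γ (t + h))) ^ 2)
      (Set.Ioc (0:ℝ) (1-h)) := ((continuousOn_const.mul hdist).pow 2)
  exact ENNReal.continuous_ofReal.comp_continuousOn hd

lemma my_lower_step {X : Type*} [MetricSpace X] (γ : ℝ → X)
    (hcont : ContinuousOn γ (Set.Icc (0:ℝ) 1)) (N : ℕ) :
    ∫⁻ t, (Set.Ioo (0:ℝ) (1 - ((N:ℝ)+1)⁻¹)).indicator
        (fun t => ENNReal.ofReal ((((N:ℝ)+1) * dist (γ t) (γ (t + ((N:ℝ)+1)⁻¹))) ^ 2)) t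
        ∂(volume.restrict (Set.Icc (0:ℝ) 1))
      ≤ 2 * curveEnergy γ := by
  set h : ℝ := ((N:ℝ)+1)⁻¹ with hh
  have hNpos : (0:ℝ) < (N:ℝ)+1 := by positivity
  have hp : 0 < h := by positivity
  have hle1 : h ≤ 1 := by
    rw [hh]
    rw [inv_le_one_iff₀]
    right; linarith
  have hNh : ((N:ℝ)+1) * h = 1 := mul_inv_cancel₀ hNpos.ne'
  have h1h : 1 - h = (N:ℝ) * h := by nlinarith
  set φ : ℝ → ℝ≥0∞ := fun t => ENNReal.ofReal ((((N:ℝ)+1) * dist (γ t) (γ (t + h))) ^ 2)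
    with hφ
  have hIooIcc : Set.Ioo (0:ℝ) (1-h) ⊆ Set.Icc (0:ℝ) 1 :=
    fun x hx => ⟨hx.1.le, by have := hx.2; linarith⟩
  have hφcont : ContinuousOn φ (Set.Ioc (0:ℝ) (1-h)) := my_phi_cont hcont hp hle1 _
  calc ∫⁻ t, (Set.Ioo (0:ℝ) (1-h)).indicator φ t ∂(volume.restrict (Set.Icc (0:ℝ) 1))
      = ∫⁻ t in Set.Ioo (0:ℝ) (1-h), φ t ∂(volume.restrict (Set.Icc (0:ℝ) 1)) :=
        lintegral_indicator measurableSet_Ioo φ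
    _ = ∫⁻ t in Set.Ioo (0:ℝ) (1-h), φ t ∂volume := by
        rw [Measure.restrict_restrict measurableSet_Ioo, Set.inter_eq_left.2 hIooIcc]
    _ ≤ ∫⁻ t in Set.Ioc (0:ℝ) (1-h), φ t ∂volume :=
        lintegral_mono_set Set.Ioo_subset_Ioc_self
    _ ≤ ∑' k : Fin N, ∫⁻ t in Set.Ioc ((k:ℝ)*h) (((k:ℝ)+1)*h), φ t ∂volume := by
        refine le_trans (lintegral_mono_set ?_) (lintegral_iUnion_le _ _)
        rw [h1h]
        exact my_Ioc_subset_iUnion N h hp.le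
    _ = ∑ k : Fin N, ∫⁻ t in Set.Ioc ((k:ℝ)*h) (((k:ℝ)+1)*h), φ t ∂volume := tsum_fintype _
    _ = ∑ k : Fin N, ∫⁻ s in Set.Ioc (0:ℝ) h, φ (s + (k:ℝ)*h) ∂volume := by
        refine Finset.sum_congr rfl fun k _ => ?_
        rw [my_translate φ ((k:ℝ)*h) 0 h, zero_add,
          show h + (k:ℝ)*h = ((k:ℝ)+1)*h by ring]
    _ = ∫⁻ s in Set.Ioc (0:ℝ) h, ∑ k : Fin N, φ (s + (k:ℝ)*h) ∂volume := by
        refine (lintegral_finset_sum' Finset.univ fun k _ => ?_).symm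
        have hmap : Set.MapsTo (fun s : ℝ => s + (k:ℝ)*h) (Set.Ioc (0:ℝ) h)
            (Set.Ioc (0:ℝ) (1-h)) := by
          intro x hx
          have hx1 := hx.1
          have hx2 := hx.2
          constructor
          · show (0:ℝ) < x + (k:ℝ)*h
            have h1 : (0:ℝ) ≤ (k:ℝ)*h := by positivity
            linarith
          · show x + (k:ℝ)*h ≤ 1 - h
            have hk1 : (k:ℝ) + 1 ≤ (N:ℝ) := by
              have : (k:ℕ) + 1 ≤ N := k.isLt
              exact_mod_cast this
            rw [h1h]
            nlinarith
        have : ContinuousOn (fun s : ℝ => φ (s + (k:ℝ)*h)) (Set.Ioc (0:ℝ) h) :=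
          hφcont.comp ((continuous_id.add continuous_const).continuousOn) hmap
        exact this.aemeasurable measurableSet_Ioc
    _ = ∫⁻ s in Set.Ioo (0:ℝ) h, ∑ k : Fin N, φ (s + (k:ℝ)*h) ∂volume := by
        rw [Measure.restrict_congr_set Ioo_ae_eq_Ioc]
    _ ≤ ∫⁻ _ in Set.Ioo (0:ℝ) h, ENNReal.ofReal ((N:ℝ)+1) * (2 * curveEnergy γ) ∂volume := by
        apply lintegral_mono_ae
        filter_upwards [ae_restrict_mem measurableSet_Ioo] with s hs
        have := my_sum_bound γ N hs.1 hs.2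
        simpa [hφ] using this
    _ = ENNReal.ofReal ((N:ℝ)+1) * (2 * curveEnergy γ) * ENNReal.ofReal h := by
        rw [setLIntegral_const, Real.volume_Ioo, sub_zero]
    _ = 2 * curveEnergy γ := by
        rw [mul_comm (ENNReal.ofReal ((N:ℝ)+1)) _, mul_assoc,
          ← ENNReal.ofReal_mul hNpos.le, hNh, ENNReal.ofReal_one, mul_one]
lemma my_lower {X : Type*} [MetricSpace X] (γ : ℝ → X) (γ' : ℝ → ℝ)
    (hcont : ContinuousOn γ (Set.Icc (0:ℝ) 1))
    (hderiv : ∀ᵐ t ∂(volume.restrict (Set.Icc (0 : ℝ) 1)),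
      Tendsto (fun h : ℝ => dist (γ t) (γ (t + h)) / |h|) (nhdsWithin 0 {0}ᶜ) (nhds (γ' t))) :
    ∫⁻ r in Set.Icc (0:ℝ) 1, ENNReal.ofReal (γ' r ^ 2) ∂volume ≤ 2 * curveEnergy γ := by
  set μ := volume.restrict (Set.Icc (0:ℝ) 1) with hμ
  set g : ℕ → ℝ → ℝ≥0∞ := fun N t => (Set.Ioo (0:ℝ) (1 - ((N:ℝ)+1)⁻¹)).indicator
      (fun t => ENNReal.ofReal ((((N:ℝ)+1) * dist (γ t) (γ (t + ((N:ℝ)+1)⁻¹))) ^ 2)) t with hg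
  have hmeas : ∀ N, AEMeasurable (g N) μ := by
    intro N
    have hNpos : (0:ℝ) < (N:ℝ)+1 := by positivity
    have hp : (0:ℝ) < ((N:ℝ)+1)⁻¹ := by positivity
    have hle1 : ((N:ℝ)+1)⁻¹ ≤ 1 := by
      rw [inv_le_one_iff₀]; right; linarith
    have hIooIcc : Set.Ioo (0:ℝ) (1-((N:ℝ)+1)⁻¹) ⊆ Set.Icc (0:ℝ) 1 :=
      fun x hx => ⟨hx.1.le, by have := hx.2; linarith⟩
    rw [hg]
    rw [aemeasurable_indicator_iff measurableSet_Ioo]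
    rw [hμ, Measure.restrict_restrict measurableSet_Ioo, Set.inter_eq_left.2 hIooIcc]
    exact ((my_phi_cont hcont hp hle1 _).mono Set.Ioo_subset_Ioc_self).aemeasurable
      measurableSet_Ioo
  have hae0 : ∀ᵐ t ∂μ, t ∈ Set.Ioo (0:ℝ) 1 := by
    have h1 : μ (Set.Icc (0:ℝ) 1 \ Set.Ioo 0 1) = 0 := by
      have hsub : Set.Icc (0:ℝ) 1 \ Set.Ioo 0 1 ⊆ ({0, 1} : Set ℝ) := by
        intro x hx
        obtain ⟨⟨h0, h1⟩, h2⟩ := hx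
        simp only [Set.mem_Ioo, not_and_or, not_lt] at h2
        simp only [Set.mem_insert_iff, Set.mem_singleton_iff]
        rcases h2 with h | h
        · left; exact le_antisymm h h0
        · right; exact le_antisymm h1 h
      refine measure_mono_null hsub ?_
      refine le_antisymm ?_ zero_le
      calc μ ({0, 1} : Set ℝ) ≤ volume ({0, 1} : Set ℝ) :=
            Measure.restrict_le_self _
        _ = 0 := ((Set.finite_singleton (1:ℝ)).insert 0).measure_zero volume
    have h2 := measure_eq_zero_iff_ae_notMem.mp h1
    filter_upwards [ae_restrict_mem measurableSet_Icc, h2] with t htIcc htn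
    by_contra h'
    exact htn ⟨htIcc, h'⟩
  have hpt : ∀ᵐ t ∂μ, ENNReal.ofReal (γ' t ^ 2) ≤ liminf (fun N => g N t) atTop := by
    filter_upwards [hderiv, hae0] with t hdt ht
    have h1t : (0:ℝ) < 1 - t := by linarith [ht.2]
    have hseq : Tendsto (fun N : ℕ => ((N:ℝ)+1)⁻¹) atTop (nhds 0) := by
      have := tendsto_one_div_add_atTop_nhds_zero_nat (𝕜 := ℝ)
      simpa [one_div] using this
    have hseq' : Tendsto (fun N : ℕ => ((N:ℝ)+1)⁻¹) atTop (nhdsWithin 0 {0}ᶜ) := by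
      apply tendsto_nhdsWithin_of_tendsto_nhds_of_eventually_within _ hseq
      apply Eventually.of_forall
      intro N
      simp only [Set.mem_compl_iff, Set.mem_singleton_iff]
      positivity
    have hq : Tendsto (fun N : ℕ => dist (γ t) (γ (t + ((N:ℝ)+1)⁻¹)) / |((N:ℝ)+1)⁻¹|)
        atTop (nhds (γ' t)) := hdt.comp hseq'
    have hq1 : Tendsto (fun N : ℕ => ((N:ℝ)+1) * dist (γ t) (γ (t + ((N:ℝ)+1)⁻¹)))
        atTop (nhds (γ' t)) := by
      apply hq.congr
      intro N
      rw [abs_of_pos (by positivity), div_eq_mul_inv, inv_inv, mul_comm]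
    have hq2 : Tendsto (fun N : ℕ =>
        ENNReal.ofReal ((((N:ℝ)+1) * dist (γ t) (γ (t + ((N:ℝ)+1)⁻¹))) ^ 2))
        atTop (nhds (ENNReal.ofReal (γ' t ^ 2))) :=
      (ENNReal.continuous_ofReal.tendsto _).comp (hq1.pow 2)
    have hev : ∀ᶠ N : ℕ in atTop, g N t =
        ENNReal.ofReal ((((N:ℝ)+1) * dist (γ t) (γ (t + ((N:ℝ)+1)⁻¹))) ^ 2) := by
      filter_upwards [hseq.eventually_lt_const h1t] with N hN
      rw [hg]
      exact Set.indicator_of_mem (Set.mem_Ioo.mpr ⟨ht.1, by linarith⟩) _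
    have hq3 : Tendsto (fun N => g N t) atTop (nhds (ENNReal.ofReal (γ' t ^ 2))) :=
      hq2.congr' (by filter_upwards [hev] with N h; exact h.symm)
    exact hq3.liminf_eq.ge
  calc ∫⁻ r, ENNReal.ofReal (γ' r ^ 2) ∂μ
      ≤ ∫⁻ t, liminf (fun N => g N t) atTop ∂μ := lintegral_mono_ae hpt
    _ ≤ liminf (fun N => ∫⁻ t, g N t ∂μ) atTop := lintegral_liminf_le' hmeas
    _ ≤ 2 * curveEnergy γ := by
        have hstep : ∀ N, ∫⁻ t, g N t ∂μ ≤ 2 * curveEnergy γ := fun N =>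
          my_lower_step γ hcont N
        calc liminf (fun N => ∫⁻ t, g N t ∂μ) atTop
            ≤ liminf (fun _ : ℕ => 2 * curveEnergy γ) atTop :=
              liminf_le_liminf (Eventually.of_forall hstep)
          _ = 2 * curveEnergy γ := liminf_const _

theorem energy_eq_metric_derivative_energy
    {X : Type*} [MetricSpace X] (γ : ℝ → X) (γ' : ℝ → ℝ)
    (hnn : ∀ r, 0 ≤ γ' r)
    (hmem : MemLp γ' 2 (volume.restrict (Set.Icc (0 : ℝ) 1)))
    (hmaj : ∀ s t : ℝ, 0 ≤ s → s ≤ t → t ≤ 1 → dist (γ s) (γ t) ≤ ∫ r in s..t, γ' r)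
    (hderiv : ∀ᵐ t ∂(volume.restrict (Set.Icc (0 : ℝ) 1)),
      Tendsto (fun h : ℝ => dist (γ t) (γ (t + h)) / |h|) (nhdsWithin 0 {0}ᶜ) (nhds (γ' t))) :
    curveEnergy γ = ENNReal.ofReal ((1 / 2) * ∫ r in (0 : ℝ)..1, γ' r ^ 2) := by
  have hint : IntegrableOn γ' (Set.Icc (0:ℝ) 1) volume := hmem.integrable one_le_two
  have hcont := my_contOn γ γ' hint hmaj
  set L := ∫⁻ r in Set.Icc (0:ℝ) 1, ENNReal.ofReal (γ' r ^ 2) ∂volume with hL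
  have hIL : ENNReal.ofReal (∫ r in (0:ℝ)..1, γ' r ^ 2) = L := by
    rw [intervalIntegral.integral_of_le zero_le_one, ← integral_Icc_eq_integral_Ioc,
      ofReal_integral_eq_lintegral_ofReal hmem.integrable_sq
        (Eventually.of_forall fun x => sq_nonneg _)]
  rw [ENNReal.ofReal_mul (by norm_num : (0:ℝ) ≤ 1/2), hIL]
  apply le_antisymm
  · unfold curveEnergy
    refine iSup_le fun n => iSup_le fun t => iSup_le fun hprop => ?_
    obtain ⟨hsm, h0, h1⟩ := hprop
    rw [ENNReal.ofReal_mul (by norm_num : (0:ℝ) ≤ 1/2)]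
    exact mul_le_mul_right (my_upper γ γ' hnn hint hmaj n t hsm h0 h1) _
  · have hlow := my_lower γ γ' hcont hderiv
    calc ENNReal.ofReal (1/2) * L
        ≤ ENNReal.ofReal (1/2) * (2 * curveEnergy γ) := mul_le_mul_right hlow _
      _ = (ENNReal.ofReal (1/2) * 2) * curveEnergy γ := (mul_assoc _ _ _).symm
      _ = curveEnergy γ := by
          rw [show (2:ℝ≥0∞) = ENNReal.ofReal 2 from (ENNReal.ofReal_ofNat 2).symm,
            ← ENNReal.ofReal_mul (by norm_num)]
          norm_num
end

section
/- Let ν and μ be finite measures on [0,1] and define E(ν|μ) = ∫₀¹ |dν/dμ|² dμ if ν ≪ μ and +∞ otherwise. If ν_N ⇀ ν and μ_N ⇀ μ weakly and liminf_N E(ν_N|μ_N) ≤ C < ∞, then ν ≪ μ and ν = f·μ with ∫₀¹ f² dμ ≤ C. -/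
open MeasureTheory ENNReal Filter Topology BoundedContinuousFunction
open scoped NNReal

open Classical in
/-- The 2-Dirichlet energy `E(ν|μ) = ∫ |dν/dμ|² dμ` if `ν ≪ μ`, and `∞` otherwise. -/
noncomputable def dirichletEnergy {α : Type*} [MeasurableSpace α] (ν μ : Measure α) : ℝ≥0∞ :=
  if ν ≪ μ then ∫⁻ x, (ν.rnDeriv μ x) ^ 2 ∂μ else ⊤

lemma two_mul_le_sq_add_sq (a b : ℝ≥0∞) : 2*(a*b) ≤ a^2 + b^2 := by
  rcases eq_or_ne a ⊤ with rfl | ha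
  · rcases eq_or_ne b 0 with rfl | hb
    · simp
    · simp [ENNReal.top_mul hb]
  rcases eq_or_ne b ⊤ with rfl | hb
  · rcases eq_or_ne a 0 with rfl | ha0
    · simp
    · simp [ENNReal.mul_top ha0]
  lift a to NNReal using ha
  lift b to NNReal using hb
  rw [← ENNReal.coe_mul, ← ENNReal.coe_pow, ← ENNReal.coe_pow, ← ENNReal.coe_add,
    ← ENNReal.coe_ofNat, ← ENNReal.coe_mul, ENNReal.coe_le_coe, ← NNReal.coe_le_coe]
  push_cast
  nlinarith [sq_nonneg ((a:ℝ) - b)]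

lemma key_pair {α : Type*} [MeasurableSpace α] (ν' μ' : Measure α)
    [SigmaFinite ν'] [SigmaFinite μ'] {g : α → ℝ≥0∞} (hg : Measurable g) :
    2 * ∫⁻ x, g x ∂ν' ≤ dirichletEnergy ν' μ' + ∫⁻ x, (g x)^2 ∂μ' := by
  unfold dirichletEnergy
  split_ifs with h
  · rw [← MeasureTheory.lintegral_rnDeriv_mul h hg.aemeasurable,
      ← lintegral_const_mul 2 (f := fun x => ν'.rnDeriv μ' x * g x) ((ν'.measurable_rnDeriv μ').mul hg)]
    rw [add_comm]
    calc ∫⁻ x, 2 * (ν'.rnDeriv μ' x * g x) ∂μ'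
        ≤ ∫⁻ x, (g x)^2 + (ν'.rnDeriv μ' x)^2 ∂μ' := by
          refine lintegral_mono fun x => ?_
          rw [mul_comm (ν'.rnDeriv μ' x)]
          exact two_mul_le_sq_add_sq _ _
      _ = _ := lintegral_add_left (hg.pow_const 2) _
  · simp

theorem dirichlet_star
    (ν μ : FiniteMeasure (Set.Icc (0 : ℝ) 1))
    (νN μN : ℕ → FiniteMeasure (Set.Icc (0 : ℝ) 1))
    (hν : Tendsto νN atTop (nhds ν)) (hμ : Tendsto μN atTop (nhds μ))
    (C : ℝ≥0∞) (hC : C < ⊤)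
    (hE : liminf (fun N => dirichletEnergy (νN N : Measure (Set.Icc (0 : ℝ) 1))
        (μN N : Measure (Set.Icc (0 : ℝ) 1))) atTop ≤ C) :
    ∀ g : (Set.Icc (0 : ℝ) 1) →ᵇ ℝ≥0,
      2 * ∫⁻ x, (g x : ℝ≥0∞) ∂(ν : Measure (Set.Icc (0 : ℝ) 1))
        ≤ C + ∫⁻ x, (g x : ℝ≥0∞)^2 ∂(μ : Measure (Set.Icc (0 : ℝ) 1)) := by
  intro g
  have hgm : Measurable fun x : (Set.Icc (0:ℝ) 1) => (g x : ℝ≥0∞) :=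
    measurable_coe_nnreal_ennreal.comp g.continuous.measurable
  set gsq : (Set.Icc (0:ℝ) 1) →ᵇ ℝ≥0 := BoundedContinuousFunction.mkOfCompact
    ⟨fun x => (g x)^2, (g.continuous.pow 2)⟩ with hgsq
  have hgsq_apply : ∀ x, ((gsq x : ℝ≥0∞)) = (g x : ℝ≥0∞)^2 := by
    intro x; simp [hgsq]
  have hT1 := FiniteMeasure.tendsto_iff_forall_lintegral_tendsto.mp hν g
  have hT2 := FiniteMeasure.tendsto_iff_forall_lintegral_tendsto.mp hμ gsq
  simp only [hgsq_apply] at hT2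
  have key : ∀ N, 2 * ∫⁻ x, (g x : ℝ≥0∞) ∂(νN N : Measure (Set.Icc (0:ℝ) 1))
      ≤ dirichletEnergy (νN N : Measure (Set.Icc (0:ℝ) 1)) (μN N : Measure (Set.Icc (0:ℝ) 1))
        + ∫⁻ x, (g x : ℝ≥0∞)^2 ∂(μN N : Measure (Set.Icc (0:ℝ) 1)) :=
    fun N => key_pair _ _ hgm
  refine ENNReal.le_of_forall_pos_le_add fun ε hε hfin => ?_
  have hfreq : ∃ᶠ N in atTop,
      dirichletEnergy (νN N : Measure (Set.Icc (0:ℝ) 1)) (μN N : Measure (Set.Icc (0:ℝ) 1)) < C + ε := by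
    exact frequently_lt_of_liminf_lt (by isBoundedDefault)
      (lt_of_le_of_lt hE (ENNReal.lt_add_right hC.ne (ENNReal.coe_ne_zero.mpr hε.ne')))
  obtain ⟨φ, hφmono, hφ⟩ := extraction_of_frequently_atTop hfreq
  have h1 : Tendsto (fun k => 2 * ∫⁻ x, (g x : ℝ≥0∞) ∂(νN (φ k) : Measure (Set.Icc (0:ℝ) 1))) atTop
      (𝓝 (2 * ∫⁻ x, (g x : ℝ≥0∞) ∂(ν : Measure (Set.Icc (0:ℝ) 1)))) :=
    ENNReal.Tendsto.const_mul (hT1.comp hφmono.tendsto_atTop) (Or.inr ENNReal.ofNat_ne_top)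
  have h2 : Tendsto (fun k => (C + ε) + ∫⁻ x, (g x : ℝ≥0∞)^2 ∂(μN (φ k) : Measure (Set.Icc (0:ℝ) 1))) atTop
      (𝓝 ((C + ε) + ∫⁻ x, (g x : ℝ≥0∞)^2 ∂(μ : Measure (Set.Icc (0:ℝ) 1)))) :=
    tendsto_const_nhds.add (hT2.comp hφmono.tendsto_atTop)
  have hle : ∀ k, 2 * ∫⁻ x, (g x : ℝ≥0∞) ∂(νN (φ k) : Measure (Set.Icc (0:ℝ) 1))
      ≤ (C + ε) + ∫⁻ x, (g x : ℝ≥0∞)^2 ∂(μN (φ k) : Measure (Set.Icc (0:ℝ) 1)) :=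
    fun k => (key (φ k)).trans (add_le_add_left (hφ k).le _)
  have := le_of_tendsto_of_tendsto' h1 h2 hle
  rwa [add_right_comm] at this

theorem stepC (ν μ : FiniteMeasure (Set.Icc (0 : ℝ) 1)) (C : ℝ≥0∞) (hC : C < ⊤)
    (star : ∀ g : (Set.Icc (0 : ℝ) 1) →ᵇ ℝ≥0,
      2 * ∫⁻ x, (g x : ℝ≥0∞) ∂(ν : Measure (Set.Icc (0:ℝ) 1))
        ≤ C + ∫⁻ x, (g x : ℝ≥0∞)^2 ∂(μ : Measure (Set.Icc (0:ℝ) 1))) :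
    (ν : Measure (Set.Icc (0:ℝ) 1)) ≪ (μ : Measure (Set.Icc (0:ℝ) 1)) := by
  refine Measure.AbsolutelyContinuous.mk fun s hms hs => ?_
  have hbound : ∀ n : ℕ, (ν : Measure (Set.Icc (0:ℝ) 1)) s ≤ (C+1) * ((n:ℝ≥0∞))⁻¹ := by
    intro n
    rcases Nat.eq_zero_or_pos n with rfl | hn
    · simp [ENNReal.mul_top (show C+1 ≠ 0 by simp)]
    have hk0 : ((n:ℝ≥0∞)) ≠ 0 := by exact_mod_cast hn.ne'
    have hkt : ((n:ℝ≥0∞)) ≠ ⊤ := by simp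
    -- choose an open set U ⊇ s with μ U < (n²)⁻¹
    have hε : (0:ℝ≥0∞) < ((n:ℝ≥0∞)^2)⁻¹ := ENNReal.inv_pos.mpr (ENNReal.pow_ne_top hkt)
    obtain ⟨U, hsU, hUopen, hU⟩ := Set.exists_isOpen_lt_of_lt s _ (hs ▸ hε)
    -- every closed subset F of U has small ν-measure
    have hclosed : ∀ F : Set (Set.Icc (0:ℝ) 1), IsClosed F → F ⊆ U →
        (ν : Measure (Set.Icc (0:ℝ) 1)) F ≤ (C+1) / (2 * n) := by
      intro F hF hFU
      obtain ⟨f, hf0, hf1, hf01⟩ := exists_continuous_zero_one_of_isClosed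
        (hUopen.isClosed_compl) hF (by simpa [Set.disjoint_compl_left_iff_subset] using hFU)
      set g : (Set.Icc (0:ℝ) 1) →ᵇ ℝ≥0 := BoundedContinuousFunction.mkOfCompact
        ⟨fun x => (n : ℝ≥0) * (f x).toNNReal,
          (continuous_const.mul (continuous_real_toNNReal.comp f.continuous))⟩ with hg
      have hg_apply : ∀ x, (g x : ℝ≥0∞) = (n:ℝ≥0∞) * ENNReal.ofReal (f x) := by
        intro x
        simp [hg, ENNReal.coe_mul, ENNReal.ofReal]
      -- lower bound for ∫ g dν
      have hlow : (n:ℝ≥0∞) * (ν : Measure (Set.Icc (0:ℝ) 1)) F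
          ≤ ∫⁻ x, (g x : ℝ≥0∞) ∂(ν : Measure (Set.Icc (0:ℝ) 1)) := by
        have : ∀ x ∈ F, (n:ℝ≥0∞) = (g x : ℝ≥0∞) := by
          intro x hx
          rw [hg_apply, hf1 hx]
          norm_num
        calc (n:ℝ≥0∞) * (ν : Measure (Set.Icc (0:ℝ) 1)) F
            = ∫⁻ _ in F, (n:ℝ≥0∞) ∂(ν : Measure (Set.Icc (0:ℝ) 1)) := by
              rw [setLIntegral_const, mul_comm]
          _ = ∫⁻ x in F, (g x : ℝ≥0∞) ∂(ν : Measure (Set.Icc (0:ℝ) 1)) :=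
              setLIntegral_congr_fun hF.measurableSet this
          _ ≤ _ := setLIntegral_le_lintegral _ _
      -- upper bound for ∫ g² dμ
      have hup : ∫⁻ x, (g x : ℝ≥0∞)^2 ∂(μ : Measure (Set.Icc (0:ℝ) 1))
          ≤ (n:ℝ≥0∞)^2 * (μ : Measure (Set.Icc (0:ℝ) 1)) U := by
        calc ∫⁻ x, (g x : ℝ≥0∞)^2 ∂(μ : Measure (Set.Icc (0:ℝ) 1))
            ≤ ∫⁻ x, U.indicator (fun _ => (n:ℝ≥0∞)^2) x ∂(μ : Measure (Set.Icc (0:ℝ) 1)) := by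
              refine lintegral_mono fun x => ?_
              by_cases hx : x ∈ U
              · simp only [Set.indicator_of_mem hx]
                rw [hg_apply]
                have hfx : ENNReal.ofReal (f x) ≤ 1 := by
                  rcases hf01 x with ⟨h0, h1⟩
                  simpa using ENNReal.ofReal_le_ofReal h1
                calc ((n:ℝ≥0∞) * ENNReal.ofReal (f x))^2
                    ≤ ((n:ℝ≥0∞) * 1)^2 := by gcongr
                  _ = (n:ℝ≥0∞)^2 := by rw [mul_one]
              · have : f x = 0 := hf0 hx
                simp [Set.indicator_of_notMem hx, hg_apply, this]
          _ = (n:ℝ≥0∞)^2 * (μ : Measure (Set.Icc (0:ℝ) 1)) U := by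
              rw [lintegral_indicator hUopen.measurableSet, setLIntegral_const, mul_comm]
      -- combine
      have hcomb := (star g)
      have : 2 * ((n:ℝ≥0∞) * (ν : Measure (Set.Icc (0:ℝ) 1)) F) ≤ C + 1 := by
        calc 2 * ((n:ℝ≥0∞) * (ν : Measure (Set.Icc (0:ℝ) 1)) F)
            ≤ 2 * ∫⁻ x, (g x : ℝ≥0∞) ∂(ν : Measure (Set.Icc (0:ℝ) 1)) := by gcongr
          _ ≤ C + ∫⁻ x, (g x : ℝ≥0∞)^2 ∂(μ : Measure (Set.Icc (0:ℝ) 1)) := hcomb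
          _ ≤ C + (n:ℝ≥0∞)^2 * (μ : Measure (Set.Icc (0:ℝ) 1)) U := by gcongr
          _ ≤ C + (n:ℝ≥0∞)^2 * ((n:ℝ≥0∞)^2)⁻¹ := add_le_add_right (mul_le_mul_right hU.le _) C
          _ = C + 1 := by
              rw [ENNReal.mul_inv_cancel (by positivity) (ENNReal.pow_ne_top hkt)]
      rw [ENNReal.le_div_iff_mul_le (Or.inl (mul_ne_zero two_ne_zero hk0)) (Or.inl (by finiteness))]
      calc (ν : Measure (Set.Icc (0:ℝ) 1)) F * (2 * n) = 2 * ((n:ℝ≥0∞) * _) := by ring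
        _ ≤ C + 1 := this
    -- pass to the open set U
    have hUbound : (ν : Measure (Set.Icc (0:ℝ) 1)) U ≤ (C+1) / (2*n) := by
      by_contra hcon
      push_neg at hcon
      obtain ⟨F, hFU, hFclosed, hFlt⟩ := hUopen.exists_lt_isClosed hcon
      exact absurd (hclosed F hFclosed hFU) (not_le.mpr hFlt)
    calc (ν : Measure (Set.Icc (0:ℝ) 1)) s ≤ (ν : Measure (Set.Icc (0:ℝ) 1)) U := measure_mono hsU
      _ ≤ (C+1)/(2*n) := hUbound
      _ ≤ (C+1) * ((n:ℝ≥0∞))⁻¹ := by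
          rw [div_eq_mul_inv]
          gcongr
          exact le_mul_of_one_le_left zero_le one_le_two
  have htend : Tendsto (fun n : ℕ => (C+1) * ((n:ℝ≥0∞))⁻¹) atTop (𝓝 0) := by
    have := ENNReal.Tendsto.const_mul (a := C+1) ENNReal.tendsto_inv_nat_nhds_zero
      (Or.inr (by finiteness))
    simpa using this
  simpa using ge_of_tendsto' htend hbound

theorem stepD (ν μ : FiniteMeasure (Set.Icc (0 : ℝ) 1)) (C : ℝ≥0∞) (hC : C < ⊤)
    (habs : (ν : Measure (Set.Icc (0:ℝ) 1)) ≪ (μ : Measure (Set.Icc (0:ℝ) 1)))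
    (star : ∀ g : (Set.Icc (0 : ℝ) 1) →ᵇ ℝ≥0,
      2 * ∫⁻ x, (g x : ℝ≥0∞) ∂(ν : Measure (Set.Icc (0:ℝ) 1))
        ≤ C + ∫⁻ x, (g x : ℝ≥0∞)^2 ∂(μ : Measure (Set.Icc (0:ℝ) 1))) :
    ∫⁻ x, ((ν : Measure (Set.Icc (0:ℝ) 1)).rnDeriv (μ : Measure (Set.Icc (0:ℝ) 1)) x) ^ 2
      ∂(μ : Measure (Set.Icc (0:ℝ) 1)) ≤ C := by
  set f := (ν : Measure (Set.Icc (0:ℝ) 1)).rnDeriv (μ : Measure (Set.Icc (0:ℝ) 1)) with hfdef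
  have hf : Measurable f := Measure.measurable_rnDeriv _ _
  -- truncated energies are bounded by C
  have key : ∀ n : ℕ, ∫⁻ x, (min (f x) n)^2 ∂(μ : Measure (Set.Icc (0:ℝ) 1)) ≤ C := by
    intro n
    set h : (Set.Icc (0:ℝ) 1) → ℝ≥0∞ := fun x => min (f x) n with hhdef
    have hhm : Measurable h := hf.min measurable_const
    have hhle : ∀ x, h x ≤ n := fun x => min_le_right _ _
    have hhne : ∀ x, h x ≠ ⊤ := fun x => ((hhle x).trans_lt (by simp)).ne
    set a := ∫⁻ x, (h x)^2 ∂(μ : Measure (Set.Icc (0:ℝ) 1)) with hadef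
    have ha_fin : a ≠ ⊤ := by
      have : a ≤ (n:ℝ≥0∞)^2 * (μ : Measure (Set.Icc (0:ℝ) 1)) Set.univ := by
        rw [hadef]
        calc ∫⁻ x, (h x)^2 ∂(μ : Measure (Set.Icc (0:ℝ) 1))
            ≤ ∫⁻ _, (n:ℝ≥0∞)^2 ∂(μ : Measure (Set.Icc (0:ℝ) 1)) := by
              refine lintegral_mono fun x => ?_; gcongr; exact hhle x
          _ = (n:ℝ≥0∞)^2 * (μ : Measure (Set.Icc (0:ℝ) 1)) Set.univ := lintegral_const _
      refine (this.trans_lt (ENNReal.mul_lt_top ?_ ?_)).ne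
      · exact (ENNReal.pow_ne_top (by simp)).lt_top
      · exact measure_lt_top _ _
    -- lower bound : a ≤ ∫⁻ h dν
    have hlow : a ≤ ∫⁻ x, h x ∂(ν : Measure (Set.Icc (0:ℝ) 1)) := by
      rw [← MeasureTheory.lintegral_rnDeriv_mul habs hhm.aemeasurable, hadef]
      refine lintegral_mono fun x => ?_
      have hle : h x ≤ f x := min_le_left _ _
      calc (h x)^2 = h x * h x := sq (h x)
        _ ≤ f x * h x := mul_le_mul_left hle _
    -- clamp inequality
    have clamp_close : ∀ r t : ℝ, 0 ≤ r → r ≤ (n:ℝ) →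
        |r - max 0 (min t (n:ℝ))| ≤ |r - t| := by
      intro r t h0 hn
      rw [abs_sub_le_iff]
      have h1 := le_abs_self (r - t)
      have h2 := neg_abs_le (r - t)
      have h3 := abs_nonneg (r - t)
      constructor
      · rcases le_total t (n:ℝ) with hc | hc
        · rw [min_eq_left hc]; rcases le_total 0 t with hd | hd
          · rw [max_eq_right hd]; linarith
          · rw [max_eq_left (by linarith)]; linarith
        · rw [min_eq_right hc, max_eq_right (by positivity)]; linarith
      · rcases le_total 0 (min t (n:ℝ)) with hd | hd
        · rw [max_eq_right hd]
          have : min t (n:ℝ) ≤ t := min_le_left _ _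
          linarith
        · rw [max_eq_left hd]; linarith
    -- main estimate
    have hmain : ∀ ε : ℝ≥0∞, ε ≠ 0 → 2 * a ≤ C + a + (2*n+2)*ε := by
      intro ε hε
      set hR : (Set.Icc (0:ℝ) 1) → ℝ := fun x => (h x).toReal with hRdef
      have hRm : Measurable hR := hhm.ennreal_toReal
      have hR0 : ∀ x, 0 ≤ hR x := fun x => ENNReal.toReal_nonneg
      have hRn : ∀ x, hR x ≤ n := fun x => by
        rw [hRdef]
        simpa using ENNReal.toReal_mono (by simp) (hhle x)
      have hofReal : ∀ x, ENNReal.ofReal (hR x) = h x := fun x =>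
        ENNReal.ofReal_toReal (hhne x)
      have hInt : Integrable hR ((μ : Measure (Set.Icc (0:ℝ) 1))
          + (ν : Measure (Set.Icc (0:ℝ) 1))) := by
        refine ⟨hRm.aestronglyMeasurable, ?_⟩
        refine HasFiniteIntegral.of_bounded (C := (n:ℝ)) (ae_of_all _ fun x => ?_)
        rw [Real.norm_eq_abs, abs_of_nonneg (hR0 x)]
        exact hRn x
      obtain ⟨g, hgapprox, -⟩ := hInt.exists_boundedContinuous_lintegral_sub_le hε
      set d : (Set.Icc (0:ℝ) 1) → ℝ≥0∞ := fun x => (‖hR x - g x‖₊ : ℝ≥0∞) with hddef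
      have hdm : Measurable d := (hRm.sub g.continuous.measurable).nnnorm.coe_nnreal_ennreal
      have hd_eq : ∀ x, d x = ENNReal.ofReal |hR x - g x| := fun x => by
        rw [hddef]; exact Real.enorm_eq_ofReal_abs _
      have hdμν : ∫⁻ x, d x ∂(μ : Measure (Set.Icc (0:ℝ) 1))
            + ∫⁻ x, d x ∂(ν : Measure (Set.Icc (0:ℝ) 1)) ≤ ε := by
        rw [← lintegral_add_measure]; exact hgapprox
      have hdμ : ∫⁻ x, d x ∂(μ : Measure (Set.Icc (0:ℝ) 1)) ≤ ε :=
        le_trans (le_add_right le_rfl) hdμν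
      have hdν : ∫⁻ x, d x ∂(ν : Measure (Set.Icc (0:ℝ) 1)) ≤ ε :=
        le_trans (le_add_left le_rfl) hdμν
      -- truncated continuous approximation
      set G : (Set.Icc (0:ℝ) 1) →ᵇ ℝ≥0 := BoundedContinuousFunction.mkOfCompact
        ⟨fun x => (min (g x) (n:ℝ)).toNNReal,
          continuous_real_toNNReal.comp (g.continuous.min continuous_const)⟩ with hGdef
      have hGreal : ∀ x, ((G x : ℝ)) = max 0 (min (g x) (n:ℝ)) := by
        intro x
        rw [hGdef]
        simp [Real.coe_toNNReal', max_comm]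
      have hGle : ∀ x, (G x : ℝ) ≤ (n:ℝ) := fun x => by
        rw [hGreal]
        exact max_le (by positivity) (min_le_right _ _)
      have hGclose : ∀ x, |hR x - (G x : ℝ)| ≤ |hR x - g x| := fun x => by
        rw [hGreal]; exact clamp_close _ _ (hR0 x) (hRn x)
      -- (i) ∫ h dν ≤ ∫ G dν + ε
      have hi : ∫⁻ x, h x ∂(ν : Measure (Set.Icc (0:ℝ) 1))
          ≤ ∫⁻ x, (G x : ℝ≥0∞) ∂(ν : Measure (Set.Icc (0:ℝ) 1)) + ε := by
        have hpt : ∀ x, h x ≤ (G x : ℝ≥0∞) + d x := by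
          intro x
          rw [← hofReal x, hd_eq x]
          have h1 : hR x ≤ (G x : ℝ) + |hR x - g x| := by
            have := hGclose x
            have h2 := le_abs_self (hR x - (G x : ℝ))
            linarith
          calc ENNReal.ofReal (hR x) ≤ ENNReal.ofReal ((G x : ℝ) + |hR x - g x|) :=
                ENNReal.ofReal_le_ofReal h1
            _ ≤ ENNReal.ofReal (G x : ℝ) + ENNReal.ofReal |hR x - g x| :=
                ENNReal.ofReal_add_le
            _ = (G x : ℝ≥0∞) + ENNReal.ofReal |hR x - g x| := by
                rw [ENNReal.ofReal_coe_nnreal]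
        calc ∫⁻ x, h x ∂(ν : Measure (Set.Icc (0:ℝ) 1))
            ≤ ∫⁻ x, ((G x : ℝ≥0∞) + d x) ∂(ν : Measure (Set.Icc (0:ℝ) 1)) :=
              lintegral_mono hpt
          _ = ∫⁻ x, (G x : ℝ≥0∞) ∂(ν : Measure (Set.Icc (0:ℝ) 1))
              + ∫⁻ x, d x ∂(ν : Measure (Set.Icc (0:ℝ) 1)) :=
              lintegral_add_left
                (measurable_coe_nnreal_ennreal.comp G.continuous.measurable) _
          _ ≤ _ := by gcongr
      -- (ii) ∫ G² dμ ≤ a + 2n ε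
      have hii : ∫⁻ x, (G x : ℝ≥0∞)^2 ∂(μ : Measure (Set.Icc (0:ℝ) 1))
          ≤ a + 2*n*ε := by
        have hpt : ∀ x, (G x : ℝ≥0∞)^2 ≤ (h x)^2 + 2*n * d x := by
          intro x
          rw [← hofReal x, hd_eq x]
          have hreal : ((G x : ℝ))^2 ≤ (hR x)^2 + 2*n*|hR x - g x| := by
            have h1 := hGclose x
            have h2 : |(G x : ℝ) - hR x| ≤ |hR x - g x| := by
              rw [abs_sub_comm]; exact h1
            have h3 : ((G x:ℝ))^2 - (hR x)^2 = ((G x:ℝ) - hR x) * ((G x:ℝ) + hR x) := by ring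
            have h4 : ((G x:ℝ) - hR x) * ((G x:ℝ) + hR x) ≤ |(G x:ℝ) - hR x| * (2*n) := by
              apply mul_le_mul (le_abs_self _) _ (by positivity) (abs_nonneg _)
              have := hGle x; have := hRn x
              have hG0 : (0:ℝ) ≤ (G x : ℝ) := (G x).2
              linarith
            nlinarith [abs_nonneg ((G x:ℝ) - hR x)]
          calc (G x : ℝ≥0∞)^2 = ENNReal.ofReal (((G x : ℝ))^2) := by
                rw [← ENNReal.ofReal_coe_nnreal]
                exact (ENNReal.ofReal_pow (G x).2 2).symm
            _ ≤ ENNReal.ofReal ((hR x)^2 + 2*n*|hR x - g x|) :=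
                ENNReal.ofReal_le_ofReal hreal
            _ ≤ ENNReal.ofReal ((hR x)^2) + ENNReal.ofReal (2*n*|hR x - g x|) :=
                ENNReal.ofReal_add_le
            _ = (ENNReal.ofReal (hR x))^2 + 2*n * ENNReal.ofReal (|hR x - g x|) := by
                rw [← ENNReal.ofReal_pow (hR0 x), ENNReal.ofReal_mul (by positivity)]
                congr 1
                rw [ENNReal.ofReal_mul (by norm_num), ENNReal.ofReal_ofNat,
                  ENNReal.ofReal_natCast]
        calc ∫⁻ x, (G x : ℝ≥0∞)^2 ∂(μ : Measure (Set.Icc (0:ℝ) 1))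
            ≤ ∫⁻ x, ((h x)^2 + 2*n * d x) ∂(μ : Measure (Set.Icc (0:ℝ) 1)) :=
              lintegral_mono hpt
          _ = a + ∫⁻ x, 2*n * d x ∂(μ : Measure (Set.Icc (0:ℝ) 1)) := by
              rw [hadef]; exact lintegral_add_left (hhm.pow_const 2) _
          _ = a + 2*n * ∫⁻ x, d x ∂(μ : Measure (Set.Icc (0:ℝ) 1)) := by
              rw [lintegral_const_mul _ hdm]
          _ ≤ a + 2*n*ε := by gcongr
      -- combine
      calc 2*a ≤ 2 * ∫⁻ x, h x ∂(ν : Measure (Set.Icc (0:ℝ) 1)) := by gcongr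
        _ ≤ 2 * (∫⁻ x, (G x : ℝ≥0∞) ∂(ν : Measure (Set.Icc (0:ℝ) 1)) + ε) := by gcongr
        _ = 2 * ∫⁻ x, (G x : ℝ≥0∞) ∂(ν : Measure (Set.Icc (0:ℝ) 1)) + 2*ε := by ring
        _ ≤ (C + ∫⁻ x, (G x : ℝ≥0∞)^2 ∂(μ : Measure (Set.Icc (0:ℝ) 1))) + 2*ε := by
            gcongr; exact star G
        _ ≤ (C + (a + 2*n*ε)) + 2*ε := by gcongr
        _ = C + a + (2*n+2)*ε := by ring
    -- let ε → 0
    have h2a : 2*a ≤ C + a := by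
      refine ENNReal.le_of_forall_pos_le_add fun δ hδ hfin => ?_
      have hcoef : (2*(n:ℝ≥0∞)+2) ≠ 0 := by simp
      have hcoef' : (2*(n:ℝ≥0∞)+2) ≠ ⊤ := by finiteness
      have hε0 : (δ : ℝ≥0∞) / (2*n+2) ≠ 0 := by
        simp [ENNReal.div_eq_zero_iff, hcoef', ENNReal.coe_ne_zero.mpr hδ.ne']
      calc 2*a ≤ C + a + (2*n+2) * ((δ:ℝ≥0∞) / (2*n+2)) := hmain _ hε0
        _ ≤ C + a + δ := by gcongr; exact ENNReal.mul_div_le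
    rw [two_mul] at h2a
    exact (ENNReal.add_le_add_iff_right ha_fin).mp h2a
  -- monotone convergence
  have hsup : ∀ x, (f x)^2 = ⨆ n : ℕ, (min (f x) n)^2 := by
    intro x
    refine le_antisymm ?_ (iSup_le fun n => by gcongr; exact min_le_left _ _)
    rcases eq_or_ne (f x) ⊤ with hx | hx
    · rw [hx]
      have : ∀ n : ℕ, (n:ℝ≥0∞) ≤ (min (⊤:ℝ≥0∞) n)^2 := by
        intro n
        rw [min_eq_right le_top]
        rcases Nat.eq_zero_or_pos n with rfl | hn
        · simp
        · exact le_self_pow₀ (by exact_mod_cast hn) (by norm_num)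
      calc (⊤:ℝ≥0∞)^2 = ⊤ := by simp
        _ = ⨆ n : ℕ, (n:ℝ≥0∞) := (ENNReal.iSup_natCast).symm
        _ ≤ _ := iSup_mono this
    · obtain ⟨m, hm⟩ := ENNReal.exists_nat_gt hx
      refine le_iSup_of_le m ?_
      rw [min_eq_left hm.le]
  calc ∫⁻ x, (f x)^2 ∂(μ : Measure (Set.Icc (0:ℝ) 1))
      = ∫⁻ x, ⨆ n : ℕ, (min (f x) n)^2 ∂(μ : Measure (Set.Icc (0:ℝ) 1)) := by
        exact lintegral_congr hsup
    _ = ⨆ n : ℕ, ∫⁻ x, (min (f x) n)^2 ∂(μ : Measure (Set.Icc (0:ℝ) 1)) := by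
        refine lintegral_iSup (fun n => (hf.min measurable_const).pow_const 2) ?_
        intro m k hmk x
        have hmin : min (f x) m ≤ min (f x) k := min_le_min le_rfl (Nat.cast_le.mpr hmk)
        exact pow_le_pow_left' hmin 2
    _ ≤ C := iSup_le key

theorem dirichletEnergy_lsc_weak_limit
    (ν μ : FiniteMeasure (Set.Icc (0 : ℝ) 1))
    (νN μN : ℕ → FiniteMeasure (Set.Icc (0 : ℝ) 1))
    (hν : Tendsto νN atTop (nhds ν)) (hμ : Tendsto μN atTop (nhds μ))
    (C : ℝ≥0∞) (hC : C < ⊤)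
    (hE : liminf (fun N => dirichletEnergy (νN N : Measure (Set.Icc (0 : ℝ) 1))
        (μN N : Measure (Set.Icc (0 : ℝ) 1))) atTop ≤ C) :
    (ν : Measure (Set.Icc (0 : ℝ) 1)) ≪ (μ : Measure (Set.Icc (0 : ℝ) 1)) ∧
      ∫⁻ x, ((ν : Measure (Set.Icc (0 : ℝ) 1)).rnDeriv (μ : Measure (Set.Icc (0 : ℝ) 1)) x) ^ 2
          ∂(μ : Measure (Set.Icc (0 : ℝ) 1)) ≤ C := by
  have hstar := dirichlet_star ν μ νN μN hν hμ C hC hE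
  have habs := stepC ν μ C hC hstar
  exact ⟨habs, stepD ν μ C hC habs hstar⟩
end

section
/- Let (X,d) be a metric space, γ : [0,1] → X a continuous curve of finite length, and for each N let ν_N = Σ_{i=0}^{N-1} d(γ(i/N),γ((i+1)/N)) · δ_{i/N} be the discrete measure on [0,1]. If ν_N converges weakly (along a subsequence) to a measure ν, then d(γ(s),γ(t)) ≤ ν([s,t]) for all 0 ≤ s ≤ t ≤ 1. -/
open MeasureTheory Filter

private lemma integral_partition {X : Type*} [MetricSpace X] (γ : ℝ → X) (N : ℕ)
    (f : BoundedContinuousFunction ℝ ℝ) :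
    ∫ x, f x ∂(∑ i : Fin N,
        ENNReal.ofReal (dist (γ ((i : ℝ) / N)) (γ (((i : ℝ) + 1) / N))) •
          Measure.dirac ((i : ℝ) / N))
      = ∑ i : Fin N, dist (γ ((i : ℝ) / N)) (γ (((i : ℝ) + 1) / N)) * f ((i : ℝ) / N) := by
  rw [integral_finset_sum_measure (fun i _ =>
    (f.integrable _).smul_measure ENNReal.ofReal_ne_top)]
  refine Finset.sum_congr rfl fun i _ => ?_
  rw [integral_smul_measure, integral_dirac, ENNReal.toReal_ofReal dist_nonneg, smul_eq_mul]


private lemma chain {X : Type*} [MetricSpace X] (γ : ℝ → X) {N a b : ℕ}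
    (hab : a ≤ b) (hbN : b ≤ N) {g : ℝ → ℝ} (hg0 : ∀ x, 0 ≤ g x)
    (hg1 : ∀ i : ℕ, a ≤ i → i < b → g ((i : ℝ) / N) = 1) :
    dist (γ ((a : ℝ) / N)) (γ ((b : ℝ) / N)) ≤
      ∑ i : Fin N, dist (γ ((i : ℝ) / N)) (γ (((i : ℝ) + 1) / N)) * g ((i : ℝ) / N) := by
  have key := dist_le_range_sum_dist (fun m => γ (((a + m : ℕ) : ℝ) / N)) (b - a)
  simp only [Nat.add_zero, Nat.add_sub_cancel' hab] at key
  calc dist (γ ((a : ℝ) / N)) (γ ((b : ℝ) / N))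
      ≤ ∑ m ∈ Finset.range (b - a),
          dist (γ (((a + m : ℕ) : ℝ) / N)) (γ (((a + (m + 1) : ℕ) : ℝ) / N)) := key
    _ = ∑ i ∈ Finset.Ico a b,
          dist (γ ((i : ℝ) / N)) (γ (((i : ℝ) + 1) / N)) * g ((i : ℝ) / N) := by
        rw [Finset.sum_Ico_eq_sum_range]
        refine Finset.sum_congr rfl fun m hm => ?_
        have hmb : a + m < b := by
          have := Finset.mem_range.mp hm; omega
        rw [hg1 (a + m) (Nat.le_add_right _ _) hmb, mul_one]
        have : ((a + (m + 1) : ℕ) : ℝ) = ((a + m : ℕ) : ℝ) + 1 := by push_cast; ring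
        rw [this]
    _ ≤ ∑ i ∈ Finset.range N,
          dist (γ ((i : ℝ) / N)) (γ (((i : ℝ) + 1) / N)) * g ((i : ℝ) / N) := by
        refine Finset.sum_le_sum_of_subset_of_nonneg ?_ fun i _ _ =>
          mul_nonneg dist_nonneg (hg0 _)
        intro i hi
        simp only [Finset.mem_Ico, Finset.mem_range] at *
        omega
    _ = ∑ i : Fin N, dist (γ ((i : ℝ) / N)) (γ (((i : ℝ) + 1) / N)) * g ((i : ℝ) / N) :=
        (Fin.sum_univ_eq_sum_range
          (fun i => dist (γ ((i : ℝ) / N)) (γ (((i : ℝ) + 1) / N)) * g ((i : ℝ) / N)) N).symm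


private lemma keyEps {X : Type*} [MetricSpace X] (γ : ℝ → X)
    (hcont : ContinuousOn γ (Set.Icc (0 : ℝ) 1))
    (ν : Measure ℝ) (φ : ℕ → ℕ) (hφ : StrictMono φ)
    (hweak : ∀ f : BoundedContinuousFunction ℝ ℝ,
      Tendsto (fun k => ∫ x, f x ∂(∑ i : Fin (φ k),
          ENNReal.ofReal (dist (γ ((i : ℝ) / (φ k))) (γ (((i : ℝ) + 1) / (φ k)))) •
            Measure.dirac ((i : ℝ) / (φ k))))
        atTop (nhds (∫ x, f x ∂ν)))
    (s t : ℝ) (hs : 0 ≤ s) (hlt : s < t) (ht1 : t ≤ 1)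
    (ε : ℝ) (hε : 0 < ε) (hε4 : 4 * ε < t - s) :
    ENNReal.ofReal (dist (γ (s + 2*ε)) (γ (t - 2*ε))) ≤ ν (Set.Icc s t) := by
  set u := s + 2*ε with hu
  set v := t - 2*ε with hv
  have huv : u < v := by rw [hu, hv]; linarith
  have hu0 : 0 ≤ u := by rw [hu]; linarith
  have hv1 : v ≤ 1 := by rw [hv]; linarith
  have hv0 : 0 ≤ v := le_of_lt (lt_of_le_of_lt hu0 huv)
  -- the bump function
  set g : ℝ → ℝ := fun x => max 0 (min 1 (min ((x - (s+ε))/ε) ((t - ε - x)/ε))) with hgdef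
  have gcont : Continuous g := by
    apply continuous_const.max
    apply continuous_const.min
    exact (((continuous_id.sub continuous_const).div_const ε).min
      ((continuous_const.sub continuous_id).div_const ε))
  have g0 : ∀ x, 0 ≤ g x := fun x => le_max_left _ _
  have g1 : ∀ x, g x ≤ 1 := fun x => max_le (by norm_num) (min_le_left _ _)
  have gone : ∀ x, u ≤ x → x ≤ v → g x = 1 := by
    intro x hx1 hx2
    have h1 : (1:ℝ) ≤ (x - (s+ε))/ε := by
      rw [le_div_iff₀ hε]; rw [hu] at hx1; linarith
    have h2 : (1:ℝ) ≤ (t - ε - x)/ε := by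
      rw [le_div_iff₀ hε]; rw [hv] at hx2; linarith
    rw [hgdef]
    simp only [min_eq_left (le_min h1 h2), max_eq_right (zero_le_one)]
  have gzero : ∀ x, x ∉ Set.Icc s t → g x = 0 := by
    intro x hx
    rw [Set.mem_Icc, not_and_or, not_le, not_le] at hx
    have : min ((x - (s+ε))/ε) ((t - ε - x)/ε) ≤ 0 := by
      rcases hx with h | h
      · exact le_trans (min_le_left _ _) (by rw [div_nonpos_iff]; right; constructor <;> linarith)
      · exact le_trans (min_le_right _ _) (by rw [div_nonpos_iff]; right; constructor <;> linarith)
    rw [hgdef]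
    simp only [max_eq_left (le_trans (min_le_right 1 _) this)]
  set f : BoundedContinuousFunction ℝ ℝ :=
    BoundedContinuousFunction.ofNormedAddCommGroup g gcont 1 (fun x => by
      rw [Real.norm_eq_abs, abs_le]; exact ⟨by linarith [g0 x], g1 x⟩) with hfdef
  have hfx : ∀ x, f x = g x := fun x => rfl
  -- indices
  set a : ℕ → ℕ := fun k => ⌈u * (φ k)⌉₊ with ha
  set b : ℕ → ℕ := fun k => ⌊v * (φ k)⌋₊ with hb
  have hφk : ∀ k : ℕ, (k : ℝ) ≤ (φ k : ℝ) := fun k => Nat.cast_le.2 (hφ.le_apply)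
  have hφpos : ∀ k : ℕ, 1 ≤ k → (0:ℝ) < φ k := fun k hk =>
    lt_of_lt_of_le (by exact_mod_cast hk) (hφk k)
  have htend : Tendsto (fun k => (φ k : ℝ)) atTop atTop :=
    tendsto_natCast_atTop_atTop.comp hφ.tendsto_atTop
  have hinv : Tendsto (fun k => 1 / (φ k : ℝ)) atTop (nhds 0) :=
    tendsto_one_div_atTop_nhds_zero_nat.comp hφ.tendsto_atTop
  -- a k / φ k → u
  have haU : Tendsto (fun k => (a k : ℝ) / (φ k)) atTop (nhds u) := by
    apply tendsto_of_tendsto_of_tendsto_of_le_of_le' (tendsto_const_nhds)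
      (by simpa using tendsto_const_nhds.add hinv : Tendsto (fun k => u + 1/(φ k : ℝ)) atTop (nhds u))
    · filter_upwards [eventually_ge_atTop 1] with k hk
      rw [le_div_iff₀ (hφpos k hk)]
      exact Nat.le_ceil _
    · filter_upwards [eventually_ge_atTop 1] with k hk
      rw [div_le_iff₀ (hφpos k hk)]
      have h1 := Nat.ceil_lt_add_one (mul_nonneg hu0 (le_of_lt (hφpos k hk)))
      have h2 : (u + 1/(φ k:ℝ)) * φ k = u * φ k + 1 := by
        rw [add_mul, one_div, inv_mul_cancel₀ (ne_of_gt (hφpos k hk))]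
      rw [h2]
      exact le_of_lt h1
  have hbV : Tendsto (fun k => (b k : ℝ) / (φ k)) atTop (nhds v) := by
    apply tendsto_of_tendsto_of_tendsto_of_le_of_le'
      (by simpa using tendsto_const_nhds.sub hinv : Tendsto (fun k => v - 1/(φ k : ℝ)) atTop (nhds v))
      (tendsto_const_nhds)
    · filter_upwards [eventually_ge_atTop 1] with k hk
      rw [sub_le_iff_le_add, ← add_div, le_div_iff₀ (hφpos k hk)]
      have := Nat.lt_floor_add_one (v * (φ k : ℝ))
      nlinarith [hφpos k hk]
    · filter_upwards [eventually_ge_atTop 1] with k hk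
      rw [div_le_iff₀ (hφpos k hk)]
      exact Nat.floor_le (mul_nonneg hv0 (le_of_lt (hφpos k hk)))
  -- eventual index conditions
  have hcond : ∀ᶠ k in atTop, a k ≤ b k ∧ b k ≤ φ k ∧ 1 ≤ k := by
    filter_upwards [htend.eventually_ge_atTop (2/(v-u)), eventually_ge_atTop 1] with k hk1 hk2
    have hN : (0:ℝ) < φ k := hφpos k hk2
    refine ⟨?_, ?_, hk2⟩
    · apply Nat.le_floor
      have h1 : ((a k : ℝ)) < u * φ k + 1 := Nat.ceil_lt_add_one (mul_nonneg hu0 hN.le)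
      have h2 : u * φ k + 1 ≤ v * φ k := by
        have huv' : (0:ℝ) < v - u := by linarith
        have : (2/(v-u)) * (v - u) ≤ (φ k : ℝ) * (v - u) :=
          mul_le_mul_of_nonneg_right hk1 huv'.le
        rw [div_mul_cancel₀ _ (ne_of_gt huv')] at this
        nlinarith
      linarith
    · have : ⌊v * (φ k : ℝ)⌋₊ ≤ ⌊((φ k : ℕ) : ℝ)⌋₊ :=
        Nat.floor_le_floor (by nlinarith)
      simpa using this
  -- eventual lower bound on the integral
  have hev : (fun k => dist (γ ((a k : ℝ)/(φ k))) (γ ((b k : ℝ)/(φ k)))) ≤ᶠ[atTop]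
      (fun k => ∫ x, f x ∂(∑ i : Fin (φ k),
          ENNReal.ofReal (dist (γ ((i : ℝ) / (φ k))) (γ (((i : ℝ) + 1) / (φ k)))) •
            Measure.dirac ((i : ℝ) / (φ k)))) := by
    filter_upwards [hcond] with k hk
    obtain ⟨hab, hbN, hk1⟩ := hk
    have hN : (0:ℝ) < φ k := hφpos k hk1
    rw [integral_partition]
    have hg1 : ∀ i : ℕ, a k ≤ i → i < b k → f ((i : ℝ) / (φ k)) = 1 := by
      intro i hi1 hi2
      rw [hfx]
      apply gone
      · rw [le_div_iff₀ hN]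
        calc u * φ k ≤ (a k : ℝ) := Nat.le_ceil _
          _ ≤ (i : ℝ) := Nat.cast_le.2 hi1
      · rw [div_le_iff₀ hN]
        calc (i : ℝ) ≤ (b k : ℝ) := Nat.cast_le.2 hi2.le
          _ ≤ v * φ k := Nat.floor_le (mul_nonneg hv0 hN.le)
    have := chain γ hab hbN (fun x => by rw [hfx]; exact g0 x) hg1
    exact this
  -- convergence of the endpoint distances
  have hmemU : ∀ᶠ k in atTop, (a k : ℝ)/(φ k) ∈ Set.Icc (0:ℝ) 1 := by
    filter_upwards [hcond] with k hk
    have hN : (0:ℝ) < φ k := hφpos k hk.2.2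
    constructor
    · positivity
    · rw [div_le_one hN]
      exact_mod_cast Nat.cast_le.2 (le_trans hk.1 hk.2.1)
  have hmemV : ∀ᶠ k in atTop, (b k : ℝ)/(φ k) ∈ Set.Icc (0:ℝ) 1 := by
    filter_upwards [hcond] with k hk
    have hN : (0:ℝ) < φ k := hφpos k hk.2.2
    constructor
    · positivity
    · rw [div_le_one hN]
      exact_mod_cast Nat.cast_le.2 hk.2.1
  have hγu : Tendsto (fun k => γ ((a k : ℝ)/(φ k))) atTop (nhds (γ u)) :=
    ((hcont u ⟨hu0, le_trans huv.le hv1⟩).tendsto).comp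
      (tendsto_nhdsWithin_iff.2 ⟨haU, hmemU⟩)
  have hγv : Tendsto (fun k => γ ((b k : ℝ)/(φ k))) atTop (nhds (γ v)) :=
    ((hcont v ⟨hv0, hv1⟩).tendsto).comp
      (tendsto_nhdsWithin_iff.2 ⟨hbV, hmemV⟩)
  have hdist : Tendsto (fun k => dist (γ ((a k : ℝ)/(φ k))) (γ ((b k : ℝ)/(φ k)))) atTop
      (nhds (dist (γ u) (γ v))) := hγu.dist hγv
  have realineq : dist (γ u) (γ v) ≤ ∫ x, f x ∂ν :=
    le_of_tendsto_of_tendsto hdist (hweak f) hev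
  -- conclude in ℝ≥0∞
  calc ENNReal.ofReal (dist (γ u) (γ v))
      ≤ ENNReal.ofReal (∫ x, f x ∂ν) := ENNReal.ofReal_le_ofReal realineq
    _ ≤ (‖∫ x, f x ∂ν‖₊ : ENNReal) := by
        rw [← enorm_eq_nnnorm, ← ofReal_norm, Real.norm_eq_abs]
        exact ENNReal.ofReal_le_ofReal (le_abs_self _)
    _ ≤ ∫⁻ x, (‖f x‖₊ : ENNReal) ∂ν := enorm_integral_le_lintegral_enorm _
    _ ≤ ∫⁻ x, (Set.Icc s t).indicator (fun _ => (1:ENNReal)) x ∂ν := by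
        refine lintegral_mono fun x => ?_
        by_cases hx : x ∈ Set.Icc s t
        · rw [Set.indicator_of_mem hx, ← enorm_eq_nnnorm, ← ofReal_norm, Real.norm_eq_abs, hfx,
            abs_of_nonneg (g0 x)]
          exact ENNReal.ofReal_le_one.2 (g1 x)
        · rw [Set.indicator_of_notMem hx, hfx, gzero x hx]
          simp
    _ = ν (Set.Icc s t) := by
        rw [lintegral_indicator measurableSet_Icc]
        simp

theorem dist_le_weak_limit_of_partition_measures
    {X : Type*} [MetricSpace X] (γ : ℝ → X)
    (hcont : ContinuousOn γ (Set.Icc (0 : ℝ) 1))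
    (L : ℝ)
    (hlen : ∀ (n : ℕ) (t : Fin (n + 1) → ℝ), StrictMono t → t 0 = 0 → t (Fin.last n) = 1 →
      ∑ i : Fin n, dist (γ (t i.castSucc)) (γ (t i.succ)) ≤ L)
    (ν : Measure ℝ) (φ : ℕ → ℕ) (hφ : StrictMono φ)
    (hweak : ∀ f : BoundedContinuousFunction ℝ ℝ,
      Tendsto (fun k => ∫ x, f x ∂(∑ i : Fin (φ k),
          ENNReal.ofReal (dist (γ ((i : ℝ) / (φ k))) (γ (((i : ℝ) + 1) / (φ k)))) •
            Measure.dirac ((i : ℝ) / (φ k))))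
        atTop (nhds (∫ x, f x ∂ν))) :
    ∀ s t : ℝ, 0 ≤ s → s ≤ t → t ≤ 1 →
      ENNReal.ofReal (dist (γ s) (γ t)) ≤ ν (Set.Icc s t) := by
  intro s t hs hst ht1
  rcases eq_or_lt_of_le hst with rfl | hlt
  · simp
  have key : ∀ ε : ℝ, 0 < ε → 4 * ε < t - s →
      ENNReal.ofReal (dist (γ (s + 2*ε)) (γ (t - 2*ε))) ≤ ν (Set.Icc s t) :=
    fun ε hε hε4 => keyEps γ hcont ν φ hφ hweak s t hs hlt ht1 ε hε hε4
  have hmem : Set.Ioo (0:ℝ) ((t-s)/4) ∈ nhdsWithin (0:ℝ) (Set.Ioi 0) :=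
    Ioo_mem_nhdsGT_of_mem ⟨le_refl 0, by linarith⟩
  have h1 : Tendsto (fun ε : ℝ => s + 2*ε) (nhdsWithin 0 (Set.Ioi 0))
      (nhdsWithin s (Set.Icc 0 1)) := by
    rw [tendsto_nhdsWithin_iff]
    constructor
    · have hc : Tendsto (fun ε : ℝ => s + 2*ε) (nhds 0) (nhds s) := by
        have : Continuous (fun ε : ℝ => s + 2*ε) := by fun_prop
        simpa using this.tendsto (0:ℝ)
      exact hc.mono_left nhdsWithin_le_nhds
    · filter_upwards [hmem] with ε hε
      exact ⟨by linarith [hε.1], by linarith [hε.1, hε.2]⟩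
  have h2 : Tendsto (fun ε : ℝ => t - 2*ε) (nhdsWithin 0 (Set.Ioi 0))
      (nhdsWithin t (Set.Icc 0 1)) := by
    rw [tendsto_nhdsWithin_iff]
    constructor
    · have hc : Tendsto (fun ε : ℝ => t - 2*ε) (nhds 0) (nhds t) := by
        have : Continuous (fun ε : ℝ => t - 2*ε) := by fun_prop
        simpa using this.tendsto (0:ℝ)
      exact hc.mono_left nhdsWithin_le_nhds
    · filter_upwards [hmem] with ε hε
      exact ⟨by linarith [hε.1, hε.2], by linarith [hε.1]⟩
  have hd : Tendsto (fun ε : ℝ => ENNReal.ofReal (dist (γ (s + 2*ε)) (γ (t - 2*ε))))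
      (nhdsWithin 0 (Set.Ioi 0)) (nhds (ENNReal.ofReal (dist (γ s) (γ t)))) :=
    (ENNReal.continuous_ofReal.tendsto _).comp
      (((hcont s ⟨hs, le_trans hlt.le ht1⟩).tendsto.comp h1).dist
        ((hcont t ⟨le_trans hs hlt.le, ht1⟩).tendsto.comp h2))
  refine le_of_tendsto hd ?_
  filter_upwards [hmem] with ε hε
  exact key ε hε.1 (by linarith [hε.2])
end
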